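/- arXiv:2205.12145 — 5 statements merged into one kernel-verified Lean document; each statement's English description precedes it below -/
import Mathlib

section
/- The measure Q is a stationary distribution for the environment process: for every bounded measurable function f : Ω_𝔎 → ℝ, one has ∫_{Ω_𝔎} Rf dQ = ∫_{Ω_𝔎} f dQ. -/
open MeasureTheory Filter

noncomputable section

/-- The lattice `ℤ^d`. -/
abbrev ZLat (d : ℕ) := Fin d → ℤ

/-- The space of uniformly elliptic environments. -/
abbrev EnvSpace (d K : ℕ) := ZLat d → (Set.Icc (2:ℤ) (K:ℤ) × Set.Icc (2:ℤ) (K:ℤ))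

/-- The shift `T j`. -/
def shiftT {d K : ℕ} (j : ZLat d) (e : EnvSpace d K) : EnvSpace d K := fun i => e (i + j)

/-- Size of the active population at `i`, as a real number. -/
def Nsize {d K : ℕ} (e : EnvSpace d K) (i : ZLat d) : ℝ := ((e i).1 : ℤ)

/-- Size of the dormant population at `i`, as a real number. -/
def Msize {d K : ℕ} (e : EnvSpace d K) (i : ZLat d) : ℝ := ((e i).2 : ℤ)

/-- Total migration rate `c := Σ_{i ≠ 0} a(0,i)`. -/
def cRate {d : ℕ} (a : ZLat d → ZLat d → ℝ) : ℝ := ∑' i : ZLat d, if i = 0 then 0 else a 0 i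

/-- The probability `q_s` of becoming dormant. -/
def qs {d : ℕ} (a : ZLat d → ZLat d → ℝ) (lam : ℝ) (K : ℕ) : ℝ :=
  lam / (cRate a + lam + lam * K)

/-- The step distribution `p̂`. -/
def phat {d : ℕ} (a : ZLat d → ZLat d → ℝ) (lam : ℝ) (K : ℕ) (i : ZLat d) : ℝ :=
  if i = 0 then lam * K / (cRate a + lam * K) else a 0 i / (cRate a + lam * K)

/-- The wake-up probabilities `ω_e(i)`. -/
def omegaE {d K : ℕ} (a : ZLat d → ZLat d → ℝ) (lam : ℝ) (e : EnvSpace d K) (i : ZLat d) : ℝ :=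
  lam * Nsize e i / (Msize e i * (cRate a + lam + lam * K))

/-- `n`-fold convolution power of a function on `ℤ^d`. -/
def convPow {d : ℕ} (p : ZLat d → ℝ) : ℕ → ZLat d → ℝ
  | 0 => fun i => if i = 0 then 1 else 0
  | n + 1 => fun i => ∑' j : ZLat d, convPow p n j * p (i - j)

/-- The Markov operator `R` of the auxiliary environment process. -/
def Rop {d K : ℕ} (a : ZLat d → ZLat d → ℝ) (lam : ℝ)
    (f : EnvSpace d K × Bool → ℝ) : EnvSpace d K × Bool → ℝ := fun x =>
  match x with
  | (e, true) => qs a lam K * f (e, false)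
      + (1 - qs a lam K) * ∑' j : ZLat d, phat a lam K j * f (shiftT j e, true)
  | (e, false) => omegaE a lam e 0 * f (e, true) + (1 - omegaE a lam e 0) * f (e, false)

/-- The strip `G = ℤ^d × {0,1}`. -/
abbrev Gstrip (d : ℕ) := ZLat d × Bool

/-- One-step transition kernel of the subordinate Markov chain in environment `e`. -/
def QK {d K : ℕ} (a : ZLat d → ZLat d → ℝ) (lam : ℝ) (e : EnvSpace d K) :
    Gstrip d → Gstrip d → ℝ
  | (i, true), (j, true) => (1 - qs a lam K) * phat a lam K (j - i)
  | (i, true), (j, false) => if j = i then qs a lam K else 0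
  | (i, false), (j, true) => if j = i then omegaE a lam e i else 0
  | (i, false), (j, false) => if j = i then 1 - omegaE a lam e i else 0

/-- `n`-step transition kernel of the subordinate Markov chain. -/
def QKn {d K : ℕ} (a : ZLat d → ZLat d → ℝ) (lam : ℝ) (e : EnvSpace d K) :
    ℕ → Gstrip d → Gstrip d → ℝ
  | 0 => fun η ξ => if ξ = η then 1 else 0
  | n + 1 => fun η ξ => ∑' ζ : Gstrip d, QKn a lam e n η ζ * QK a lam e ζ ξ

/-- Time-`t` transition kernel of the single-particle dual (uniformization representation). -/
def ptk {d K : ℕ} (a : ZLat d → ZLat d → ℝ) (lam : ℝ) (e : EnvSpace d K) (t : ℝ)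
    (η ξ : Gstrip d) : ℝ :=
  Real.exp (-((cRate a + lam + lam * K) * t)) *
    ∑' n : ℕ, ((cRate a + lam + lam * K) * t) ^ n / (n.factorial : ℝ) * QKn a lam e n η ξ

end

section Aux

open MeasureTheory Filter

theorem Measurable.tsum_real {α : Type*} [MeasurableSpace α] {ι : Type*} [Countable ι]
    {F : ι → α → ℝ} (hF : ∀ i, Measurable (F i)) (hs : ∀ x, Summable fun i => F i x) :
    Measurable fun x => ∑' i, F i x := by
  classical
  apply measurable_of_tendsto_metrizable' (atTop : Filter (Finset ι))
    (f := fun s x => ∑ i ∈ s, F i x)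
  · exact fun s => Finset.measurable_sum _ fun i _ => hF i
  · rw [tendsto_pi_nhds]
    intro x
    exact (hs x).hasSum

theorem measurable_shiftT {d K : ℕ} (j : ZLat d) :
    Measurable (shiftT j : EnvSpace d K → EnvSpace d K) :=
  measurable_pi_lambda _ fun i => measurable_pi_apply (i + j)

theorem measurable_Nsize {d K : ℕ} (i : ZLat d) :
    Measurable fun e : EnvSpace d K => Nsize e i :=
  (Measurable.of_discrete
    (f := fun p : Set.Icc (2:ℤ) (K:ℤ) × Set.Icc (2:ℤ) (K:ℤ) => ((p.1 : ℤ) : ℝ))).comp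
    (measurable_pi_apply i)

theorem measurable_Msize {d K : ℕ} (i : ZLat d) :
    Measurable fun e : EnvSpace d K => Msize e i :=
  (Measurable.of_discrete
    (f := fun p : Set.Icc (2:ℤ) (K:ℤ) × Set.Icc (2:ℤ) (K:ℤ) => ((p.2 : ℤ) : ℝ))).comp
    (measurable_pi_apply i)

theorem set_bool_cases (t : Set Bool) :
    t = ∅ ∨ t = {true} ∨ t = {false} ∨ t = Set.univ := by
  by_cases h1 : true ∈ t <;> by_cases h2 : false ∈ t
  · refine Or.inr (Or.inr (Or.inr ?_)); ext b; cases b <;> simp [h1, h2]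
  · refine Or.inr (Or.inl ?_); ext b; cases b <;> simp [h1, h2]
  · refine Or.inr (Or.inr (Or.inl ?_)); ext b; cases b <;> simp [h1, h2]
  · refine Or.inl ?_; ext b; cases b <;> simp [h1, h2]

end Aux


/-- Stationarity of `Q` for the environment process.
For every bounded measurable `f : Ω_𝔎 → ℝ`, `∫ Rf dQ = ∫ f dQ`. -/
theorem stationarity_of_environment_process
    (d K : ℕ) (hd : 1 ≤ d) (hK : 2 ≤ K)
    (a : ZLat d → ZLat d → ℝ) (lam : ℝ) (hlam : 0 < lam)
    (ha_nonneg : ∀ i j, 0 ≤ a i j)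
    (ha_transl : ∀ i j, a i j = a 0 (j - i))
    (ha_irr : ∀ i : ZLat d, ∃ n : ℕ, 0 < convPow (a 0) n i)
    (ha_sum : Summable (a 0))
    (ha00 : 0 < a 0 0)
    (Pbar : Measure (EnvSpace d K)) [IsProbabilityMeasure Pbar]
    (hPinv : ∀ (j : ZLat d) (A : Set (EnvSpace d K)), MeasurableSet A →
      Pbar (shiftT j ⁻¹' A) = Pbar A)
    (hPerg : ∀ A : Set (EnvSpace d K), MeasurableSet A →
      (∀ j : ZLat d, shiftT j ⁻¹' A = A) → Pbar A = 0 ∨ Pbar A = 1)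
    (Q : Measure (EnvSpace d K × Bool)) [IsProbabilityMeasure Q]
    (hQ1 : ∀ A : Set (EnvSpace d K), MeasurableSet A →
      Q (A ×ˢ ({true} : Set Bool)) =
        ENNReal.ofReal (1 / (1 + ∫ e', Msize e' 0 / Nsize e' 0 ∂Pbar)) * Pbar A)
    (hQ0 : ∀ A : Set (EnvSpace d K), MeasurableSet A →
      Q (A ×ˢ ({false} : Set Bool)) =
        ENNReal.ofReal ((1 / (1 + ∫ e', Msize e' 0 / Nsize e' 0 ∂Pbar)) *
          ∫ e' in A, Msize e' 0 / Nsize e' 0 ∂Pbar)) :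
    ∀ f : EnvSpace d K × Bool → ℝ, Measurable f → (∃ C, ∀ x, |f x| ≤ C) →
      ∫ x, Rop a lam f x ∂Q = ∫ x, f x ∂Q := by
  classical
  intro f hf hfb
  obtain ⟨C0, hC0⟩ := hfb
  set C := max C0 0 with hCdef
  have hC : ∀ x, |f x| ≤ C := fun x => (hC0 x).trans (le_max_left _ _)
  have hCnn : 0 ≤ C := le_max_right _ _
  -- basic positivity facts
  have hc0 : 0 ≤ cRate a := tsum_nonneg fun i => by
    by_cases h : i = 0 <;> simp [h, ha_nonneg]
  have hK2 : (2:ℝ) ≤ K := by exact_mod_cast hK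
  have hlamK : 0 < lam * K := by nlinarith
  have hD : 0 < cRate a + lam + lam * K := by nlinarith
  have hcK : 0 < cRate a + lam * K := by nlinarith
  have hqs0 : 0 ≤ qs a lam K := by unfold qs; positivity
  have hqs1 : qs a lam K ≤ 1 := by
    unfold qs; rw [div_le_one hD]; nlinarith
  -- phat facts
  have hsum_c : Summable (fun i : ZLat d => if i = 0 then 0 else a 0 i) :=
    Summable.of_nonneg_of_le (fun i => by by_cases h : i = 0 <;> simp [h, ha_nonneg])
      (fun i => by by_cases h : i = 0 <;> simp [h, ha_nonneg]) ha_sum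
  have hphat_hasSum : HasSum (phat a lam K) 1 := by
    have h1 : HasSum (fun i : ZLat d => if i = 0 then lam * K else 0) (lam * K) :=
      hasSum_ite_eq 0 (lam * K)
    have h2 : HasSum (fun i : ZLat d => if i = 0 then 0 else a 0 i) (cRate a) :=
      hsum_c.hasSum
    have h3 := (h1.add h2).mul_right (cRate a + lam * K)⁻¹
    have heq : (fun i : ZLat d =>
        ((if i = 0 then lam * K else 0) + (if i = 0 then 0 else a 0 i)) *
          (cRate a + lam * K)⁻¹) = phat a lam K := by
      funext i
      by_cases h : i = 0 <;> simp [phat, h, div_eq_mul_inv]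
    rw [heq] at h3
    rw [add_comm (lam * K), mul_inv_cancel₀ hcK.ne'] at h3
    exact h3
  have hphat_sum : Summable (phat a lam K) := hphat_hasSum.summable
  have hphat_tsum : ∑' j : ZLat d, phat a lam K j = 1 := hphat_hasSum.tsum_eq
  have hphat_nonneg : ∀ i, 0 ≤ phat a lam K i := fun i => by
    unfold phat
    by_cases h : i = 0
    · simp only [h, if_true]; positivity
    · simp only [h, if_false]; exact div_nonneg (ha_nonneg 0 i) hcK.le
  -- environment bounds
  have hN2 : ∀ (e : EnvSpace d K) (i : ZLat d), (2:ℝ) ≤ Nsize e i := fun e i => by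
    have := (e i).1.2.1; unfold Nsize; exact_mod_cast this
  have hNK : ∀ (e : EnvSpace d K) (i : ZLat d), Nsize e i ≤ K := fun e i => by
    have := (e i).1.2.2; unfold Nsize; exact_mod_cast this
  have hM2 : ∀ (e : EnvSpace d K) (i : ZLat d), (2:ℝ) ≤ Msize e i := fun e i => by
    have := (e i).2.2.1; unfold Msize; exact_mod_cast this
  have hMK : ∀ (e : EnvSpace d K) (i : ZLat d), Msize e i ≤ K := fun e i => by
    have := (e i).2.2.2; unfold Msize; exact_mod_cast this
  set m : EnvSpace d K → ℝ := fun e => Msize e 0 / Nsize e 0 with hmdef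
  have hm_nonneg : ∀ e, 0 ≤ m e := fun e =>
    div_nonneg (by linarith [hM2 e 0]) (by linarith [hN2 e 0])
  have hm_bd : ∀ e, m e ≤ K / 2 := fun e =>
    div_le_div₀ (by positivity) (hMK e 0) two_pos (hN2 e 0)
  have hm_meas : Measurable m := (measurable_Msize 0).div (measurable_Nsize 0)
  -- omega facts
  have hω_eq : ∀ e : EnvSpace d K, omegaE a lam e 0 * m e = qs a lam K := by
    intro e
    have hN : Nsize e 0 ≠ 0 := by have := hN2 e 0; positivity
    have hM : Msize e 0 ≠ 0 := by have := hM2 e 0; positivity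
    show lam * Nsize e 0 / (Msize e 0 * (cRate a + lam + lam * K)) *
      (Msize e 0 / Nsize e 0) = lam / (cRate a + lam + lam * K)
    field_simp
  have hω0 : ∀ e : EnvSpace d K, 0 ≤ omegaE a lam e 0 := fun e => by
    unfold omegaE
    have h1 := hN2 e 0; have h2 := hM2 e 0
    positivity
  have hω1 : ∀ e : EnvSpace d K, omegaE a lam e 0 ≤ 1 := fun e => by
    unfold omegaE
    have h1 := hNK e 0; have h2 := hM2 e 0
    rw [div_le_one (by nlinarith)]
    nlinarith
  have hω_meas : Measurable fun e : EnvSpace d K => omegaE a lam e 0 := by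
    unfold omegaE
    exact ((measurable_Nsize 0).const_mul lam).div ((measurable_Msize 0).mul_const _)
  -- integrability helper
  have hint : ∀ (B : ℝ) (g : EnvSpace d K → ℝ), Measurable g → (∀ e, |g e| ≤ B) →
      Integrable g Pbar := fun B g hg hB =>
    (integrable_const B).mono' hg.aestronglyMeasurable
      (Filter.Eventually.of_forall fun e => by simpa [Real.norm_eq_abs] using hB e)
  -- translation invariance
  have hmap : ∀ j : ZLat d, Measure.map (shiftT j) Pbar = Pbar := fun j =>
    Measure.ext fun s hs => by
      rw [Measure.map_apply (measurable_shiftT j) hs]; exact hPinv j s hs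
  have hTint : ∀ (j : ZLat d) (g : EnvSpace d K → ℝ), Measurable g →
      ∫ e, g (shiftT j e) ∂Pbar = ∫ e, g e ∂Pbar := fun j g hg => by
    conv_rhs => rw [← hmap j]
    rw [integral_map (measurable_shiftT j).aemeasurable hg.aestronglyMeasurable]
  -- the measure decomposition of Q
  set ρ := ∫ e', m e' ∂Pbar with hρdef
  have hρ0 : 0 ≤ ρ := integral_nonneg hm_nonneg
  have h1ρ : 0 < 1 + ρ := by linarith
  set cR : ℝ := 1 / (1 + ρ) with hcRdef
  have hcR0 : 0 ≤ cR := by positivity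
  set ν : Measure (EnvSpace d K) := Pbar.withDensity (fun e => ((m e).toNNReal : ENNReal))
    with hνdef
  have hm_int : Integrable m Pbar := hint (K/2) m hm_meas
    (fun e => by rw [abs_of_nonneg (hm_nonneg e)]; exact hm_bd e)
  have hν_apply : ∀ s : Set (EnvSpace d K), MeasurableSet s →
      ν s = ENNReal.ofReal (∫ e in s, m e ∂Pbar) := by
    intro s hs
    rw [hνdef, withDensity_apply _ hs,
      ofReal_integral_eq_lintegral_ofReal hm_int.integrableOn
        (Filter.Eventually.of_forall hm_nonneg)]
    rfl
  haveI hνfin : IsFiniteMeasure ν :=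
    ⟨by rw [hν_apply _ MeasurableSet.univ]; exact ENNReal.ofReal_lt_top⟩
  have hmk_t : Measurable (fun e : EnvSpace d K => (e, true)) :=
    measurable_id.prodMk measurable_const
  have hmk_f : Measurable (fun e : EnvSpace d K => (e, false)) :=
    measurable_id.prodMk measurable_const
  set μ1 : Measure (EnvSpace d K × Bool) := Measure.map (fun e => (e, true)) Pbar with hμ1def
  set μ0 : Measure (EnvSpace d K × Bool) := Measure.map (fun e => (e, false)) ν with hμ0def
  have htm : ∀ t : Set Bool, MeasurableSet t := fun t => MeasurableSet.of_discrete
  have hrect : ∀ s : Set (EnvSpace d K), MeasurableSet s → ∀ t : Set Bool,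
      Q (s ×ˢ t) = (ENNReal.ofReal cR • (μ1 + μ0)) (s ×ˢ t) := by
    intro s hs t
    have hmeast : MeasurableSet (s ×ˢ t) := hs.prod (htm t)
    have hRHS : (ENNReal.ofReal cR • (μ1 + μ0)) (s ×ˢ t) =
        ENNReal.ofReal cR * (Pbar ((fun e : EnvSpace d K => (e, true)) ⁻¹' (s ×ˢ t))
          + ν ((fun e : EnvSpace d K => (e, false)) ⁻¹' (s ×ˢ t))) := by
      rw [Measure.smul_apply, Measure.add_apply, hμ1def, hμ0def,
        Measure.map_apply hmk_t hmeast, Measure.map_apply hmk_f hmeast, smul_eq_mul]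
    have hpret : ∀ t : Set Bool, true ∈ t →
        (fun e : EnvSpace d K => (e, true)) ⁻¹' (s ×ˢ t) = s := by
      intro t ht'
      ext e
      simp only [Set.mem_preimage, Set.mem_prod, Set.mem_setOf_eq]
      exact ⟨fun h => h.1, fun h => ⟨h, ht'⟩⟩
    have hpret' : ∀ t : Set Bool, true ∉ t →
        (fun e : EnvSpace d K => (e, true)) ⁻¹' (s ×ˢ t) = ∅ := by
      intro t ht'
      ext e
      simp only [Set.mem_preimage, Set.mem_prod, Set.mem_empty_iff_false, iff_false]
      rintro ⟨-, h⟩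
      exact ht' h
    have hpref : ∀ t : Set Bool, false ∈ t →
        (fun e : EnvSpace d K => (e, false)) ⁻¹' (s ×ˢ t) = s := by
      intro t ht'
      ext e
      simp only [Set.mem_preimage, Set.mem_prod, Set.mem_setOf_eq]
      exact ⟨fun h => h.1, fun h => ⟨h, ht'⟩⟩
    have hpref' : ∀ t : Set Bool, false ∉ t →
        (fun e : EnvSpace d K => (e, false)) ⁻¹' (s ×ˢ t) = ∅ := by
      intro t ht'
      ext e
      simp only [Set.mem_preimage, Set.mem_prod, Set.mem_empty_iff_false, iff_false]
      rintro ⟨-, h⟩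
      exact ht' h
    rcases set_bool_cases t with rfl | rfl | rfl | rfl
    · rw [hRHS, hpret' (∅ : Set Bool) (by simp), hpref' (∅ : Set Bool) (by simp), Set.prod_empty]
      rw [measure_empty, measure_empty, measure_empty, add_zero, mul_zero]
    · rw [hQ1 s hs, hRHS, hpret ({true} : Set Bool) rfl, hpref' ({true} : Set Bool) (by simp),
        measure_empty, add_zero]
    · rw [hQ0 s hs, hRHS, hpret' ({false} : Set Bool) (by simp), hpref ({false} : Set Bool) rfl, hν_apply s hs,
        ENNReal.ofReal_mul hcR0, measure_empty, zero_add]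
    · have hsplit : s ×ˢ (Set.univ : Set Bool) =
          s ×ˢ ({true} : Set Bool) ∪ s ×ˢ ({false} : Set Bool) := by
        ext x
        rcases x with ⟨e, b⟩
        simp only [Set.mem_prod, Set.mem_union, Set.mem_univ, and_true,
          Set.mem_singleton_iff]
        cases b
        · constructor
          · intro h; exact Or.inr ⟨h, rfl⟩
          · rintro (⟨h, -⟩ | ⟨h, -⟩) <;> exact h
        · constructor
          · intro h; exact Or.inl ⟨h, rfl⟩
          · rintro (⟨h, -⟩ | ⟨h, -⟩) <;> exact h
      have hdisj : Disjoint (s ×ˢ ({true} : Set Bool)) (s ×ˢ ({false} : Set Bool)) := by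
        rw [Set.disjoint_left]
        rintro ⟨e, b⟩ h1 h2
        rw [Set.mem_prod, Set.mem_singleton_iff] at h1 h2
        rw [h1.2] at h2
        exact absurd h2.2 (by simp)
      rw [hsplit, measure_union hdisj (hs.prod (htm _)), hQ1 s hs, hQ0 s hs,
        ← hsplit, hRHS, hpret Set.univ trivial, hpref Set.univ trivial, hν_apply s hs,
        ENNReal.ofReal_mul hcR0, mul_add]
  have hQeq : Q = ENNReal.ofReal cR • (μ1 + μ0) := by
    refine ext_of_generate_finite _ generateFrom_prod.symm isPiSystem_prod ?_ ?_
    · rintro A ⟨s, hs, t, ht, rfl⟩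
      exact hrect s hs t
    · rw [← Set.univ_prod_univ]
      exact hrect _ MeasurableSet.univ _
  -- the integral decomposition of Q
  have hQint : ∀ (B : ℝ) (g : EnvSpace d K × Bool → ℝ), Measurable g → (∀ x, |g x| ≤ B) →
      ∫ x, g x ∂Q = cR * ((∫ e, g (e, true) ∂Pbar) + ∫ e, g (e, false) * m e ∂Pbar) := by
    intro B g hg hB
    have hgt : Measurable fun e : EnvSpace d K => g (e, true) := hg.comp hmk_t
    have hgf : Measurable fun e : EnvSpace d K => g (e, false) := hg.comp hmk_f
    have hint1 : Integrable g μ1 := by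
      rw [hμ1def, integrable_map_measure hg.aestronglyMeasurable hmk_t.aemeasurable]
      exact hint B _ hgt (fun e => hB _)
    have hint0 : Integrable g μ0 := by
      rw [hμ0def, integrable_map_measure hg.aestronglyMeasurable hmk_f.aemeasurable]
      exact (integrable_const B).mono' hgf.aestronglyMeasurable
        (Filter.Eventually.of_forall fun e => by simpa [Real.norm_eq_abs] using hB (e, false))
    rw [hQeq, integral_smul_measure, integral_add_measure hint1 hint0,
      hμ1def, integral_map hmk_t.aemeasurable hg.aestronglyMeasurable,
      hμ0def, integral_map hmk_f.aemeasurable hg.aestronglyMeasurable, hνdef,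
      integral_withDensity_eq_integral_smul hm_meas.real_toNNReal,
      ENNReal.toReal_ofReal hcR0]
    have hsm : ∀ e, (m e).toNNReal • g (e, false) = g (e, false) * m e := fun e => by
      rw [NNReal.smul_def, Real.coe_toNNReal _ (hm_nonneg e), smul_eq_mul, mul_comm]
    simp only [hsm, smul_eq_mul]
  -- boundedness and measurability of components of Rop
  have hfT_meas : ∀ j : ZLat d, Measurable fun e : EnvSpace d K => f (shiftT j e, true) :=
    fun j => (hf.comp hmk_t).comp (measurable_shiftT j)
  have hterm_meas : ∀ j : ZLat d,
      Measurable fun e : EnvSpace d K => phat a lam K j * f (shiftT j e, true) :=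
    fun j => (hfT_meas j).const_mul _
  have hterm_bd : ∀ (j : ZLat d) (e : EnvSpace d K),
      |phat a lam K j * f (shiftT j e, true)| ≤ phat a lam K j * C := fun j e => by
    rw [abs_mul, abs_of_nonneg (hphat_nonneg j)]
    exact mul_le_mul_of_nonneg_left (hC _) (hphat_nonneg j)
  have hsum_abs : ∀ e : EnvSpace d K,
      Summable fun j : ZLat d => |phat a lam K j * f (shiftT j e, true)| := fun e =>
    Summable.of_nonneg_of_le (fun j => abs_nonneg _) (fun j => hterm_bd j e)
      (hphat_sum.mul_right C)
  have hsum_e : ∀ e : EnvSpace d K,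
      Summable fun j : ZLat d => phat a lam K j * f (shiftT j e, true) := fun e =>
    (hsum_abs e).of_abs
  set S : EnvSpace d K → ℝ := fun e => ∑' j : ZLat d, phat a lam K j * f (shiftT j e, true)
    with hSdef
  have hS_meas : Measurable S := Measurable.tsum_real hterm_meas hsum_e
  have hS_bd : ∀ e, |S e| ≤ C := by
    intro e
    have h1 : |S e| ≤ ∑' j : ZLat d, |phat a lam K j * f (shiftT j e, true)| := by
      rw [hSdef]
      have h0 := norm_tsum_le_tsum_norm
        (f := fun j : ZLat d => phat a lam K j * f (shiftT j e, true))
        (by simpa only [Real.norm_eq_abs] using hsum_abs e)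
      simpa only [Real.norm_eq_abs] using h0
    have h2 : (∑' j : ZLat d, |phat a lam K j * f (shiftT j e, true)|)
        ≤ ∑' j : ZLat d, phat a lam K j * C :=
      Summable.tsum_le_tsum (fun j => hterm_bd j e) (hsum_abs e) (hphat_sum.mul_right C)
    have h3 : (∑' j : ZLat d, phat a lam K j * C) = C := by
      rw [tsum_mul_right, hphat_tsum, one_mul]
    linarith
  have hconv : ∀ q x y : ℝ, 0 ≤ q → q ≤ 1 → |x| ≤ C → |y| ≤ C → |q * x + (1 - q) * y| ≤ C := by
    intro q x y hq0 hq1 hx hy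
    have h1 : |q * x + (1 - q) * y| ≤ |q * x| + |(1 - q) * y| := abs_add_le _ _
    have h2 : |q * x| = q * |x| := by rw [abs_mul, abs_of_nonneg hq0]
    have h3 : |(1 - q) * y| = (1 - q) * |y| := by
      rw [abs_mul, abs_of_nonneg (by linarith : (0:ℝ) ≤ 1 - q)]
    have h4 : q * |x| ≤ q * C := mul_le_mul_of_nonneg_left hx hq0
    have h5 : (1 - q) * |y| ≤ (1 - q) * C :=
      mul_le_mul_of_nonneg_left hy (by linarith : (0:ℝ) ≤ 1 - q)
    linarith
  have hRf_bd : ∀ x, |Rop a lam f x| ≤ C := by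
    rintro ⟨e, b⟩
    cases b
    · exact hconv _ _ _ (hω0 e) (hω1 e) (hC _) (hC _)
    · exact hconv _ _ _ hqs0 hqs1 (hC _) (hS_bd e)
  have hRf_meas : Measurable (Rop a lam f) := by
    have hA : Measurable fun e : EnvSpace d K =>
        qs a lam K * f (e, false) + (1 - qs a lam K) * S e :=
      ((hf.comp hmk_f).const_mul _).add (hS_meas.const_mul _)
    have hB : Measurable fun e : EnvSpace d K =>
        omegaE a lam e 0 * f (e, true) + (1 - omegaE a lam e 0) * f (e, false) :=
      (hω_meas.mul (hf.comp hmk_t)).add ((measurable_const.sub hω_meas).mul (hf.comp hmk_f))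
    have hre : Rop a lam f = fun x : EnvSpace d K × Bool =>
        if x.2 = true then qs a lam K * f (x.1, false) + (1 - qs a lam K) * S x.1
        else omegaE a lam x.1 0 * f (x.1, true) + (1 - omegaE a lam x.1 0) * f (x.1, false) := by
      funext x; rcases x with ⟨e, b⟩; cases b <;> rfl
    rw [hre]
    exact Measurable.ite (measurable_snd (measurableSet_singleton true))
      (hA.comp measurable_fst) (hB.comp measurable_fst)
  -- the two Pbar-integrals of Rop
  have hF_int : ∀ j : ZLat d,
      Integrable (fun e => phat a lam K j * f (shiftT j e, true)) Pbar :=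
    fun j => hint (phat a lam K j * C) _ (hterm_meas j) (hterm_bd j)
  have hF_norm : Summable fun j : ZLat d =>
      ∫ e, ‖phat a lam K j * f (shiftT j e, true)‖ ∂Pbar := by
    apply Summable.of_nonneg_of_le (fun j => integral_nonneg fun e => norm_nonneg _)
      (fun j => ?_) (hphat_sum.mul_right C)
    calc ∫ e, ‖phat a lam K j * f (shiftT j e, true)‖ ∂Pbar
        ≤ ∫ _e, phat a lam K j * C ∂Pbar :=
          integral_mono (hF_int j).norm (integrable_const _)
            (fun e => by simpa only [Real.norm_eq_abs] using hterm_bd j e)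
      _ = phat a lam K j * C := by simp
  have hSint : ∫ e, S e ∂Pbar = ∫ e, f (e, true) ∂Pbar := by
    rw [hSdef, ← integral_tsum_of_summable_integral_norm hF_int hF_norm]
    have hjj : ∀ j : ZLat d, ∫ e, phat a lam K j * f (shiftT j e, true) ∂Pbar
        = phat a lam K j * ∫ e, f (e, true) ∂Pbar := fun j => by
      rw [integral_const_mul, hTint j (fun e => f (e, true)) (hf.comp hmk_t)]
    rw [tsum_congr hjj, tsum_mul_right, hphat_tsum, one_mul]
  have intS : Integrable S Pbar := hint C S hS_meas hS_bd
  have intf1 : Integrable (fun e => f (e, true)) Pbar :=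
    hint C _ (hf.comp hmk_t) (fun e => hC _)
  have intf0 : Integrable (fun e => f (e, false)) Pbar :=
    hint C _ (hf.comp hmk_f) (fun e => hC _)
  have intf0m : Integrable (fun e => f (e, false) * m e) Pbar := by
    apply hint (C * (K / 2)) _ ((hf.comp hmk_f).mul hm_meas)
    intro e
    show |f (e, false) * m e| ≤ _
    rw [abs_mul, abs_of_nonneg (hm_nonneg e)]
    exact mul_le_mul (hC _) (hm_bd e) (hm_nonneg e) hCnn
  have hIT : ∫ e, Rop a lam f (e, true) ∂Pbar =
      qs a lam K * (∫ e, f (e, false) ∂Pbar)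
        + (1 - qs a lam K) * ∫ e, f (e, true) ∂Pbar := by
    have h1 : ∀ e : EnvSpace d K, Rop a lam f (e, true) =
        qs a lam K * f (e, false) + (1 - qs a lam K) * S e := fun e => rfl
    simp only [h1]
    rw [integral_add (intf0.const_mul _) (intS.const_mul _), integral_const_mul,
      integral_const_mul, hSint]
  have hpt : ∀ e : EnvSpace d K, Rop a lam f (e, false) * m e =
      qs a lam K * f (e, true) + (f (e, false) * m e - qs a lam K * f (e, false)) := by
    intro e
    have h := hω_eq e
    show (omegaE a lam e 0 * f (e, true) + (1 - omegaE a lam e 0) * f (e, false)) * m e = _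
    linear_combination (f (e, true) - f (e, false)) * h
  have hIF : ∫ e, Rop a lam f (e, false) * m e ∂Pbar =
      qs a lam K * (∫ e, f (e, true) ∂Pbar)
        + ((∫ e, f (e, false) * m e ∂Pbar) - qs a lam K * ∫ e, f (e, false) ∂Pbar) := by
    have intA : Integrable (fun e => qs a lam K * f (e, true)) Pbar := intf1.const_mul _
    have intD : Integrable (fun e => qs a lam K * f (e, false)) Pbar := intf0.const_mul _
    have intB : Integrable
        (fun e => f (e, false) * m e - qs a lam K * f (e, false)) Pbar := intf0m.sub intD
    simp only [hpt]
    rw [integral_add intA intB, integral_const_mul, integral_sub intf0m intD,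
      integral_const_mul]
  rw [hQint C (Rop a lam f) hRf_meas hRf_bd, hQint C f hf hC, hIT, hIF]
  ring
end

section
/- Functions fixed by the square of the Markov operator are constant: under assumptions (i)–(iv) below, if ψ ∈ L^∞(Ω,Q) satisfies κ(κψ) = ψ Q-almost everywhere, then ψ = ∫_Ω ψ dQ holds Q-almost everywhere. -/
open MeasureTheory Filter

private lemma abs_int_le {Ω : Type*} [MeasurableSpace Ω] (μ : MeasureTheory.Measure Ω)
    (f : Ω → ℝ) : |∫ x, f x ∂μ| ≤ ∫ x, |f x| ∂μ := by
  simpa [Real.norm_eq_abs] using MeasureTheory.norm_integral_le_integral_norm (μ := μ) f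

private lemma integrable_of_bdd {Ω : Type*} [MeasurableSpace Ω] {μ : Measure Ω}
    [IsFiniteMeasure μ] {f : Ω → ℝ} (hf : Measurable f) {C : ℝ} (hC : ∀ x, |f x| ≤ C) :
    Integrable f μ :=
  (integrable_const C).mono' hf.aestronglyMeasurable (Eventually.of_forall fun x => by
    simpa [Real.norm_eq_abs] using hC x)

/-- Functions fixed by the square of the Markov operator are constant. -/
theorem fixed_by_square_of_markov_operator_is_constant
    {Ω : Type*} [MeasurableSpace Ω] [MeasurableSpace.CountablyGenerated Ω]
    (Q : Measure Ω) [IsProbabilityMeasure Q]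
    (κ : ProbabilityTheory.Kernel Ω Ω) [ProbabilityTheory.IsMarkovKernel κ]
    (hstat : ∀ f : Ω → ℝ, Measurable f → (∃ C, ∀ x, |f x| ≤ C) →
      ∫ w, (∫ y, f y ∂(κ w)) ∂Q = ∫ w, f w ∂Q)
    (hrev : ∀ f g : Ω → ℝ, Measurable f → (∃ C, ∀ x, |f x| ≤ C) →
      Measurable g → (∃ C, ∀ x, |g x| ≤ C) →
      ∫ w, g w * (∫ y, f y ∂(κ w)) ∂Q = ∫ w, f w * (∫ y, g y ∂(κ w)) ∂Q)
    (herg : ∀ A : Set Ω, MeasurableSet A →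
      (∀ᵐ w ∂Q, (∫ y, A.indicator (fun _ => (1:ℝ)) y ∂(κ w)) =
        A.indicator (fun _ => (1:ℝ)) w) →
      Q A = 0 ∨ Q A = 1)
    (hspec : ∀ g : Ω → ℝ, Measurable g → (∃ C, ∀ x, |g x| ≤ C) →
      (∀ᵐ w ∂Q, (∫ y, g y ∂(κ w)) = - g w) → (∀ᵐ w ∂Q, g w = 0))
    (ψ : Ω → ℝ) (hψ : Measurable ψ) (hψb : ∃ C, ∀ x, |ψ x| ≤ C)
    (hfix : ∀ᵐ w ∂Q, (∫ y, (∫ z, ψ z ∂(κ y)) ∂(κ w)) = ψ w) :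
    ∀ᵐ w ∂Q, ψ w = ∫ x, ψ x ∂Q := by
  obtain ⟨C₀, hC₀⟩ := hψb
  set C : ℝ := max C₀ 0 with hCdef
  have hC : ∀ x, |ψ x| ≤ C := fun x => (hC₀ x).trans (le_max_left _ _)
  have hC0 : 0 ≤ C := le_max_right _ _
  -- φ = κψ
  set φ : Ω → ℝ := fun w => ∫ y, ψ y ∂(κ w) with hφdef
  have hφm : Measurable φ := by
    have : StronglyMeasurable fun w => ∫ y, (fun p : Ω × Ω => ψ p.2) (w, y) ∂(κ w) :=
      (hψ.comp measurable_snd).stronglyMeasurable.integral_kernel_prod_right'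
    exact this.measurable
  have hψint : ∀ w : Ω, Integrable ψ (κ w) := fun w => integrable_of_bdd hψ hC
  have hφb : ∀ x, |φ x| ≤ C := by
    intro x
    calc |φ x| ≤ ∫ y, |ψ y| ∂(κ x) := abs_int_le _ _
    _ ≤ ∫ _, C ∂(κ x) := integral_mono (hψint x).abs (integrable_const C) hC
    _ = C := by simp
  have hφint : ∀ w : Ω, Integrable φ (κ w) := fun w => integrable_of_bdd hφm hφb
  -- step 1 : ψ = φ a.e. (via hspec applied to g = ψ - φ)
  have hinv : ∀ᵐ w ∂Q, φ w = ψ w := by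
    have h1 : ∀ᵐ w ∂Q, (∫ y, (ψ - φ) y ∂(κ w)) = - (ψ - φ) w := by
      filter_upwards [hfix] with w hw
      have : (∫ y, (ψ - φ) y ∂(κ w)) = (∫ y, ψ y ∂(κ w)) - ∫ y, φ y ∂(κ w) := by
        simpa using integral_sub (hψint w) (hφint w)
      rw [this]
      have : (∫ y, φ y ∂(κ w)) = ψ w := hw
      rw [this]
      simp [hφdef]
    have := hspec (ψ - φ) (hψ.sub hφm) ⟨2*C, fun x => by
      have := abs_sub (ψ x) (φ x)
      simp only [Pi.sub_apply]
      calc |ψ x - φ x| ≤ |ψ x| + |φ x| := abs_sub _ _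
      _ ≤ C + C := add_le_add (hC x) (hφb x)
      _ = 2*C := by ring⟩ h1
    filter_upwards [this] with w hw
    have : ψ w - φ w = 0 := hw
    linarith
  -- step 2 : variance is zero
  have hsqm : Measurable fun x => ψ x ^ 2 := hψ.pow_const 2
  have hsqb : ∀ x, |ψ x ^ 2| ≤ C ^ 2 := fun x => by
    rw [abs_pow]
    exact pow_le_pow_left₀ (abs_nonneg _) (hC x) 2
  set V : Ω → ℝ := fun w => ∫ y, (ψ y - ψ w) ^ 2 ∂(κ w) with hVdef
  have hVm : Measurable V := by
    have : StronglyMeasurable fun w =>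
        ∫ y, (fun p : Ω × Ω => (ψ p.2 - ψ p.1) ^ 2) (w, y) ∂(κ w) :=
      (((hψ.comp measurable_snd).sub (hψ.comp measurable_fst)).pow_const
        2).stronglyMeasurable.integral_kernel_prod_right'
    exact this.measurable
  have hVnonneg : ∀ w, 0 ≤ V w := fun w =>
    integral_nonneg fun y => sq_nonneg _
  have hVb : ∀ w, |V w| ≤ (2*C)^2 := by
    intro w
    rw [abs_of_nonneg (hVnonneg w)]
    calc V w ≤ ∫ _, (2*C)^2 ∂(κ w) := by
          apply integral_mono _ (integrable_const _)
          · intro y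
            have h1 : |ψ y - ψ w| ≤ 2*C := by
              calc |ψ y - ψ w| ≤ |ψ y| + |ψ w| := abs_sub _ _
              _ ≤ C + C := add_le_add (hC y) (hC w)
              _ = 2*C := by ring
            calc (ψ y - ψ w)^2 = |ψ y - ψ w|^2 := by rw [sq_abs]
            _ ≤ (2*C)^2 := pow_le_pow_left₀ (abs_nonneg _) h1 2
          · exact integrable_of_bdd ((hψ.sub (measurable_const (a := ψ w))).pow_const 2)
              (fun y => by
                rw [abs_of_nonneg (sq_nonneg _)]
                have h1 : |ψ y - ψ w| ≤ 2*C := by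
                  calc |ψ y - ψ w| ≤ |ψ y| + |ψ w| := abs_sub _ _
                  _ ≤ C + C := add_le_add (hC y) (hC w)
                  _ = 2*C := by ring
                calc (ψ y - ψ w)^2 = |ψ y - ψ w|^2 := (sq_abs _).symm
                _ ≤ (2*C)^2 := pow_le_pow_left₀ (abs_nonneg _) h1 2)
    _ = (2*C)^2 := by simp
  have hVint : Integrable V Q := integrable_of_bdd hVm hVb
  have hVexpand : ∀ w, V w = (∫ y, ψ y ^ 2 ∂(κ w)) - 2 * ψ w * φ w + ψ w ^ 2 := by
    intro w
    have hint1 : Integrable (fun y => ψ y ^ 2) (κ w) := integrable_of_bdd hsqm hsqb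
    have hexp : ∀ y, (ψ y - ψ w)^2 = ψ y ^ 2 - 2 * ψ w * ψ y + ψ w ^ 2 := fun y => by ring
    calc V w = ∫ y, (ψ y ^ 2 - 2 * ψ w * ψ y + ψ w ^ 2) ∂(κ w) := by
          simp only [hVdef]; exact integral_congr_ae (Eventually.of_forall hexp)
    _ = (∫ y, (ψ y ^ 2 - 2 * ψ w * ψ y) ∂(κ w)) + ∫ _, ψ w ^ 2 ∂(κ w) :=
          integral_add (hint1.sub ((hψint w).const_mul _)) (integrable_const _)
    _ = (∫ y, ψ y ^ 2 ∂(κ w)) - (∫ y, 2 * ψ w * ψ y ∂(κ w)) + ψ w ^ 2 := by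
          rw [integral_sub hint1 ((hψint w).const_mul _)]; simp
    _ = (∫ y, ψ y ^ 2 ∂(κ w)) - 2 * ψ w * φ w + ψ w ^ 2 := by
          rw [integral_const_mul]
  have hκsqm : Measurable fun w => ∫ y, ψ y ^ 2 ∂(κ w) := by
    have : StronglyMeasurable fun w => ∫ y, (fun p : Ω × Ω => ψ p.2 ^ 2) (w, y) ∂(κ w) :=
      ((hψ.comp measurable_snd).pow_const 2).stronglyMeasurable.integral_kernel_prod_right'
    exact this.measurable
  have hκsqb : ∀ w, |∫ y, ψ y ^ 2 ∂(κ w)| ≤ C^2 := by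
    intro w
    calc |∫ y, ψ y ^ 2 ∂(κ w)| ≤ ∫ y, |ψ y ^ 2| ∂(κ w) := abs_int_le _ _
    _ ≤ ∫ _, C^2 ∂(κ w) :=
        integral_mono (integrable_of_bdd hsqm hsqb).abs (integrable_const _) hsqb
    _ = C^2 := by simp
  have hψφint : Integrable (fun w => ψ w * φ w) Q :=
    integrable_of_bdd (hψ.mul hφm) (C := C*C) fun x => by
      rw [abs_mul]
      exact mul_le_mul (hC x) (hφb x) (abs_nonneg _) hC0
  have hIzero : ∫ w, V w ∂Q = 0 := by
    have e1 : ∫ w, V w ∂Q =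
        (∫ w, (∫ y, ψ y ^ 2 ∂(κ w)) ∂Q) - 2 * (∫ w, ψ w * φ w ∂Q) + ∫ w, ψ w ^ 2 ∂Q := by
      rw [show (fun w => V w) = fun w =>
          (∫ y, ψ y ^ 2 ∂(κ w)) - 2 * (ψ w * φ w) + ψ w ^ 2 from
        funext fun w => by rw [hVexpand w]; ring]
      rw [integral_add, integral_sub, integral_const_mul]
      · exact integrable_of_bdd hκsqm hκsqb
      · exact hψφint.const_mul 2
      · exact (integrable_of_bdd hκsqm hκsqb).sub (hψφint.const_mul 2)
      · exact integrable_of_bdd hsqm hsqb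
    have e2 : ∫ w, (∫ y, ψ y ^ 2 ∂(κ w)) ∂Q = ∫ w, ψ w ^ 2 ∂Q :=
      hstat (fun x => ψ x ^ 2) hsqm ⟨C^2, hsqb⟩
    have e3 : ∫ w, ψ w * φ w ∂Q = ∫ w, ψ w ^ 2 ∂Q := by
      apply integral_congr_ae
      filter_upwards [hinv] with w hw
      rw [hw]; ring
    rw [e1, e2, e3]; ring
  have hVzero : ∀ᵐ w ∂Q, V w = 0 :=
    (integral_eq_zero_iff_of_nonneg_ae (Eventually.of_forall hVnonneg) hVint).mp hIzero
  -- step 3 : for a.e. w, ψ = ψ w  κ(w)-a.e.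
  have hconst : ∀ᵐ w ∂Q, ∀ᵐ y ∂(κ w), ψ y = ψ w := by
    filter_upwards [hVzero] with w hw
    have hint : Integrable (fun y => (ψ y - ψ w)^2) (κ w) :=
      integrable_of_bdd ((hψ.sub measurable_const).pow_const 2) (C := (2*C)^2)
        (fun y => by
          rw [abs_of_nonneg (sq_nonneg _)]
          have h1 : |ψ y - ψ w| ≤ 2*C := by
            calc |ψ y - ψ w| ≤ |ψ y| + |ψ w| := abs_sub _ _
            _ ≤ C + C := add_le_add (hC y) (hC w)
            _ = 2*C := by ring
          calc (ψ y - ψ w)^2 = |ψ y - ψ w|^2 := (sq_abs _).symm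
          _ ≤ (2*C)^2 := pow_le_pow_left₀ (abs_nonneg _) h1 2)
    have := (integral_eq_zero_iff_of_nonneg_ae
      (Eventually.of_forall fun y => sq_nonneg (ψ y - ψ w)) hint).mp hw
    filter_upwards [this] with y hy
    have : ψ y - ψ w = 0 := by
      have := hy
      simpa [pow_eq_zero_iff] using pow_eq_zero_iff (n := 2) (by norm_num) |>.mp hy
    linarith
  -- step 4 : level sets are trivial
  have hlevel : ∀ q : ℚ, Q {x | (q:ℝ) < ψ x} = 0 ∨ Q {x | (q:ℝ) < ψ x} = 1 := by
    intro q
    set A : Set Ω := {x | (q:ℝ) < ψ x} with hAdef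
    have hAm : MeasurableSet A := measurableSet_lt measurable_const hψ
    apply herg A hAm
    filter_upwards [hconst] with w hw
    have : ∀ᵐ y ∂(κ w), A.indicator (fun _ => (1:ℝ)) y = A.indicator (fun _ => (1:ℝ)) w := by
      filter_upwards [hw] with y hy
      simp only [Set.indicator_apply, hAdef, Set.mem_setOf_eq, hy]
    rw [integral_congr_ae this, integral_const]
    simp
  -- step 5 : conclude ψ is a.e. constant
  set S : Set ℝ := {c : ℝ | ∃ q : ℚ, (q:ℝ) = c ∧ Q {x | (q:ℝ) < ψ x} = 1} with hSdef
  have hSne : S.Nonempty := by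
    obtain ⟨q, hq⟩ := exists_rat_lt (-C)
    refine ⟨q, q, rfl, ?_⟩
    have : {x | (q:ℝ) < ψ x} = Set.univ := by
      ext x
      simp only [Set.mem_setOf_eq, Set.mem_univ, iff_true]
      have := (abs_le.mp (hC x)).1
      linarith
    rw [this]; simp
  have hSbdd : BddAbove S := by
    refine ⟨C, fun c hc => ?_⟩
    obtain ⟨q, hq, hq1⟩ := hc
    by_contra h
    push_neg at h
    have : {x | (q:ℝ) < ψ x} = ∅ := by
      ext x
      simp only [Set.mem_setOf_eq, Set.mem_empty_iff_false, iff_false, not_lt]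
      have := (abs_le.mp (hC x)).2
      linarith
    rw [this] at hq1
    simp at hq1
  set c : ℝ := sSup S with hcdef
  have hub : ∀ᵐ w ∂Q, ∀ q : ℚ, c < (q:ℝ) → ψ w ≤ q := by
    rw [ae_all_iff]
    intro q
    by_cases h : c < (q:ℝ)
    · have h0 : Q {x | (q:ℝ) < ψ x} = 0 := by
        rcases hlevel q with h1 | h1
        · exact h1
        · exfalso
          have : (q:ℝ) ∈ S := ⟨q, rfl, h1⟩
          have := le_csSup hSbdd this
          linarith
      have : ∀ᵐ w ∂Q, ¬ ((q:ℝ) < ψ w) := by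
        rw [ae_iff]; simpa using h0
      filter_upwards [this] with w hw _
      linarith [not_lt.mp hw]
    · filter_upwards with w hq; exact absurd hq h
  have hlb : ∀ᵐ w ∂Q, ∀ q : ℚ, (q:ℝ) < c → (q:ℝ) < ψ w := by
    rw [ae_all_iff]
    intro q
    by_cases h : (q:ℝ) < c
    · obtain ⟨r, hrS, hqr⟩ := exists_lt_of_lt_csSup hSne h
      obtain ⟨q', hq', hq'1⟩ := hrS
      have hsub : {x | (q':ℝ) < ψ x} ⊆ {x | (q:ℝ) < ψ x} := by
        intro x hx
        simp only [Set.mem_setOf_eq] at hx ⊢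
        have hqq' : (q:ℝ) < (q':ℝ) := by rw [hq']; exact hqr
        linarith
      have h1 : Q {x | (q:ℝ) < ψ x} = 1 := by
        refine le_antisymm prob_le_one ?_
        calc (1:ENNReal) = Q {x | (q':ℝ) < ψ x} := hq'1.symm
        _ ≤ Q {x | (q:ℝ) < ψ x} := measure_mono hsub
      have hAm : MeasurableSet {x | (q:ℝ) < ψ x} := measurableSet_lt measurable_const hψ
      have : Q {x | (q:ℝ) < ψ x}ᶜ = 0 := (prob_compl_eq_zero_iff hAm).mpr h1
      have hae : ∀ᵐ w ∂Q, w ∈ {x | (q:ℝ) < ψ x} := by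
        rw [ae_iff]
        simpa [Set.compl_setOf] using this
      filter_upwards [hae] with w hw _
      exact hw
    · filter_upwards with w hq; exact absurd hq h
  have hcongr : ∀ᵐ w ∂Q, ψ w = c := by
    filter_upwards [hub, hlb] with w h1 h2
    refine le_antisymm ?_ ?_
    · by_contra h
      push_neg at h
      obtain ⟨q, hq1, hq2⟩ := exists_rat_btwn h
      exact absurd (h1 q hq1) (not_le.mpr hq2)
    · by_contra h
      push_neg at h
      obtain ⟨q, hq1, hq2⟩ := exists_rat_btwn h
      exact absurd (h2 q hq2) (not_lt.mpr (le_of_lt hq1))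
  have hintc : ∫ x, ψ x ∂Q = c := by
    rw [integral_congr_ae hcongr]; simp
  filter_upwards [hcongr] with w hw
  rw [hw, hintc]
end

section
/- Trivial peripheral point-spectrum of the environment-process operator: assume the recurrence hypothesis. If g ∈ L^∞(Ω_𝔎,Q) satisfies Rg = −g Q-almost everywhere, then g = 0 Q-almost everywhere; that is, −1 is not an eigenvalue of R viewed as an operator on L^∞(Ω_𝔎,Q). -/
open MeasureTheory Filter

set_option maxHeartbeats 1000000 in
/-- Trivial peripheral point-spectrum of the environment-process operator. -/
theorem trivial_peripheral_point_spectrum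
    (d K : ℕ) (hd : 1 ≤ d) (hK : 2 ≤ K)
    (a : ZLat d → ZLat d → ℝ) (lam : ℝ) (hlam : 0 < lam)
    (ha_nonneg : ∀ i j, 0 ≤ a i j)
    (ha_transl : ∀ i j, a i j = a 0 (j - i))
    (ha_irr : ∀ i : ZLat d, ∃ n : ℕ, 0 < convPow (a 0) n i)
    (ha_sum : Summable (a 0))
    (ha00 : 0 < a 0 0)
    (Pbar : Measure (EnvSpace d K)) [IsProbabilityMeasure Pbar]
    (hPinv : ∀ (j : ZLat d) (A : Set (EnvSpace d K)), MeasurableSet A →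
      Pbar (shiftT j ⁻¹' A) = Pbar A)
    (hPerg : ∀ A : Set (EnvSpace d K), MeasurableSet A →
      (∀ j : ZLat d, shiftT j ⁻¹' A = A) → Pbar A = 0 ∨ Pbar A = 1)
    (Q : Measure (EnvSpace d K × Bool)) [IsProbabilityMeasure Q]
    (hQ1 : ∀ A : Set (EnvSpace d K), MeasurableSet A →
      Q (A ×ˢ ({true} : Set Bool)) =
        ENNReal.ofReal (1 / (1 + ∫ e', Msize e' 0 / Nsize e' 0 ∂Pbar)) * Pbar A)
    (hQ0 : ∀ A : Set (EnvSpace d K), MeasurableSet A →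
      Q (A ×ˢ ({false} : Set Bool)) =
        ENNReal.ofReal ((1 / (1 + ∫ e', Msize e' 0 / Nsize e' 0 ∂Pbar)) *
          ∫ e' in A, Msize e' 0 / Nsize e' 0 ∂Pbar))
    (hrec : ∑' n : ℕ, ENNReal.ofReal (convPow (phat a lam K) n 0) = ⊤)
    (g : EnvSpace d K × Bool → ℝ) (hg : Measurable g) (hgb : ∃ C, ∀ x, |g x| ≤ C)
    (heig : ∀ᵐ x ∂Q, Rop a lam g x = - g x) :
    ∀ᵐ x ∂Q, g x = 0 := by
  classical
  obtain ⟨C, hC⟩ := hgb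
  have hKr : (2:ℝ) ≤ (K:ℝ) := by exact_mod_cast hK
  -- basic facts about c = cRate a
  have hsm : Summable (fun i : ZLat d => if i = 0 then (0:ℝ) else a 0 i) := by
    refine Summable.of_nonneg_of_le (fun i => ?_) (fun i => ?_) ha_sum
    · split
      · exact le_rfl
      · exact ha_nonneg 0 i
    · split
      · next h => subst h; exact le_of_lt ha00
      · exact le_rfl
  have hc0 : 0 ≤ cRate a := tsum_nonneg (fun i => by
    split
    · exact le_rfl
    · exact ha_nonneg 0 i)
  have hlK : 0 < lam * (K:ℝ) := by nlinarith
  have hD : 0 < cRate a + lam + lam * K := by nlinarith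
  have hB : 0 < cRate a + lam * K := by nlinarith
  -- phat : nonneg, summable, total mass one
  have hphat_eq : ∀ i, phat a lam K i =
      (if i = 0 then lam * (K:ℝ) else a 0 i) / (cRate a + lam * K) := by
    intro i; unfold phat; split <;> rfl
  have hp_nonneg : ∀ i, 0 ≤ phat a lam K i := by
    intro i; rw [hphat_eq]
    refine div_nonneg ?_ (le_of_lt hB)
    split
    · exact le_of_lt hlK
    · exact ha_nonneg 0 i
  have hf1_sum : Summable (fun i : ZLat d => if i = 0 then lam * (K:ℝ) else 0) :=
    (hasSum_ite_eq (0 : ZLat d) (lam * (K:ℝ))).summable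
  have hf_eq : ∀ i : ZLat d, (if i = 0 then lam * (K:ℝ) else a 0 i)
      = (if i = 0 then lam * (K:ℝ) else 0) + (if i = 0 then (0:ℝ) else a 0 i) := by
    intro i; by_cases h : i = 0 <;> simp [h]
  have hf_sum : Summable (fun i : ZLat d => if i = 0 then lam * (K:ℝ) else a 0 i) := by
    have := hf1_sum.add hsm
    exact this.congr fun i => (hf_eq i).symm
  have hf_tsum : ∑' i : ZLat d, (if i = 0 then lam * (K:ℝ) else a 0 i)
      = lam * K + cRate a := by
    rw [tsum_congr hf_eq, Summable.tsum_add hf1_sum hsm, tsum_ite_eq]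
    rfl
  have hp_sum : Summable (phat a lam K) := by
    have := hf_sum.div_const (cRate a + lam * K)
    simpa only [← hphat_eq] using this
  have hp_tsum : ∑' i, phat a lam K i = 1 := by
    simp_rw [hphat_eq]
    rw [tsum_div_const, hf_tsum, div_eq_one_iff_eq (ne_of_gt hB)]
    ring
  -- qs facts
  have hq0 : 0 < qs a lam K := div_pos hlam hD
  have hq1 : qs a lam K ≤ 1 := by
    rw [qs, div_le_one hD]; nlinarith
  -- pointwise bounds on populations
  have hN2 : ∀ (e : EnvSpace d K) i, (2:ℝ) ≤ Nsize e i := fun e i => by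
    have := ((e i).1).2.1; unfold Nsize; exact_mod_cast this
  have hNK : ∀ (e : EnvSpace d K) i, Nsize e i ≤ (K:ℝ) := fun e i => by
    have := ((e i).1).2.2; unfold Nsize; exact_mod_cast this
  have hM2 : ∀ (e : EnvSpace d K) i, (2:ℝ) ≤ Msize e i := fun e i => by
    have := ((e i).2).2.1; unfold Msize; exact_mod_cast this
  have hMK : ∀ (e : EnvSpace d K) i, Msize e i ≤ (K:ℝ) := fun e i => by
    have := ((e i).2).2.2; unfold Msize; exact_mod_cast this
  have hω : ∀ e : EnvSpace d K, 0 < omegaE a lam e 0 ∧ omegaE a lam e 0 ≤ 1/2 := by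
    intro e
    have h2 := hN2 e 0; have h3 := hNK e 0; have h4 := hM2 e 0
    unfold omegaE
    constructor
    · apply div_pos
      · nlinarith
      · nlinarith
    · rw [div_le_div_iff₀ (by nlinarith) (by norm_num)]
      nlinarith
  -- measurability of slices
  have mg1 : Measurable (fun e : EnvSpace d K => g (e, true)) :=
    hg.comp (measurable_id.prodMk measurable_const)
  have mg0 : Measurable (fun e : EnvSpace d K => g (e, false)) :=
    hg.comp (measurable_id.prodMk measurable_const)
  -- measurability and integrability of e ↦ M/N
  have hMmeas : Measurable (fun e : EnvSpace d K => Msize e 0) := by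
    unfold Msize
    exact (measurable_from_top (f := fun n : ℤ => (n : ℝ))).comp
      (measurable_subtype_coe.comp (measurable_snd.comp (measurable_pi_apply 0)))
  have hNmeas : Measurable (fun e : EnvSpace d K => Nsize e 0) := by
    unfold Nsize
    exact (measurable_from_top (f := fun n : ℤ => (n : ℝ))).comp
      (measurable_subtype_coe.comp (measurable_fst.comp (measurable_pi_apply 0)))
  have hfmeas : Measurable (fun e : EnvSpace d K => Msize e 0 / Nsize e 0) := hMmeas.div hNmeas
  have hf_nonneg : ∀ e : EnvSpace d K, 0 ≤ Msize e 0 / Nsize e 0 := fun e =>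
    div_nonneg (by linarith [hM2 e 0]) (by linarith [hN2 e 0])
  have hfint : Integrable (fun e : EnvSpace d K => Msize e 0 / Nsize e 0) Pbar := by
    refine Integrable.mono' (integrable_const (K:ℝ)) hfmeas.aestronglyMeasurable
      (ae_of_all _ fun e => ?_)
    rw [Real.norm_eq_abs, abs_of_nonneg (hf_nonneg e), div_le_iff₀ (by linarith [hN2 e 0])]
    nlinarith [hMK e 0, hN2 e 0, hM2 e 0]
  -- positivity of the normalizing constant
  have hI0 : 0 ≤ ∫ e', Msize e' 0 / Nsize e' 0 ∂Pbar := integral_nonneg hf_nonneg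
  have hc₁ : 0 < 1 / (1 + ∫ e', Msize e' 0 / Nsize e' 0 ∂Pbar) := by positivity
  -- null sets transfer from Q to Pbar on each slice
  have htrue_null : ∀ B : Set (EnvSpace d K), MeasurableSet B →
      Q (B ×ˢ ({true} : Set Bool)) = 0 → Pbar B = 0 := by
    intro B hBm hq
    rw [hQ1 B hBm] at hq
    rcases mul_eq_zero.mp hq with h | h
    · rw [ENNReal.ofReal_eq_zero] at h; linarith
    · exact h
  have hfalse_null : ∀ B : Set (EnvSpace d K), MeasurableSet B →
      Q (B ×ˢ ({false} : Set Bool)) = 0 → Pbar B = 0 := by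
    intro B hBm hq
    rw [hQ0 B hBm, ENNReal.ofReal_eq_zero] at hq
    have hI1 : ∫ e' in B, Msize e' 0 / Nsize e' 0 ∂Pbar ≤ 0 := by nlinarith
    have hlow : (Pbar B).toReal * (2 / K) ≤ ∫ e' in B, Msize e' 0 / Nsize e' 0 ∂Pbar := by
      have h := setIntegral_mono_on (f := fun _ : EnvSpace d K => (2:ℝ)/K)
        (g := fun e : EnvSpace d K => Msize e 0 / Nsize e 0)
        (integrableOn_const (measure_ne_top Pbar B))
        hfint.integrableOn hBm
        (fun e _ => div_le_div₀ (by linarith [hM2 e 0]) (hM2 e 0) (by linarith [hN2 e 0]) (hNK e 0))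
      simpa [setIntegral_const, smul_eq_mul, measureReal_def] using h
    have hKpos : (0:ℝ) < 2 / K := by positivity
    have htr : (Pbar B).toReal = 0 := by
      nlinarith [ENNReal.toReal_nonneg (a := Pbar B)]
    exact ((ENNReal.toReal_eq_zero_iff _).mp htr).resolve_right (measure_ne_top Pbar B)
  -- extract the a.e. eigen-equations on each slice
  set Nset := {x : EnvSpace d K × Bool | ¬ Rop a lam g x = - g x} with hNset
  have hNnull : Q Nset = 0 := ae_iff.mp heig
  have hN'null : Q (toMeasurable Q Nset) = 0 := by
    rw [measure_toMeasurable]; exact hNnull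
  have hN'm : MeasurableSet (toMeasurable Q Nset) := measurableSet_toMeasurable Q Nset
  have hslice : ∀ b : Bool, ∀ᵐ e ∂Pbar, Rop a lam g (e, b) = - g (e, b) := by
    intro b
    have hmk : Measurable (fun e : EnvSpace d K => (e, b)) :=
      measurable_id.prodMk measurable_const
    have hAm : MeasurableSet ((fun e : EnvSpace d K => (e, b)) ⁻¹' toMeasurable Q Nset) :=
      hN'm.preimage hmk
    have hsub : (((fun e : EnvSpace d K => (e, b)) ⁻¹' toMeasurable Q Nset)
        ×ˢ ({b} : Set Bool)) ⊆ toMeasurable Q Nset := by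
      rintro ⟨e, b'⟩ ⟨he, hb⟩
      have : b' = b := hb
      subst this; exact he
    have h0 : Q (((fun e : EnvSpace d K => (e, b)) ⁻¹' toMeasurable Q Nset)
        ×ˢ ({b} : Set Bool)) = 0 :=
      le_antisymm (hN'null ▸ measure_mono hsub) (zero_le)
    have hP0 : Pbar ((fun e : EnvSpace d K => (e, b)) ⁻¹' toMeasurable Q Nset) = 0 := by
      cases b
      · exact hfalse_null _ hAm h0
      · exact htrue_null _ hAm h0
    rw [ae_iff]
    refine measure_mono_null (fun e he => ?_) hP0
    exact subset_toMeasurable Q Nset he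
  have haet := hslice true
  have haef := hslice false
  -- shift invariance of a.e. bounds
  have hshift : ∀ B : ℝ, (∀ᵐ e ∂Pbar, |g (e, true)| ≤ B) →
      ∀ j : ZLat d, ∀ᵐ e ∂Pbar, |g (shiftT j e, true)| ≤ B := by
    intro B hBae j
    have hA : MeasurableSet {e : EnvSpace d K | ¬ |g (e, true)| ≤ B} :=
      (measurableSet_le mg1.abs measurable_const).compl
    have h0 : Pbar {e : EnvSpace d K | ¬ |g (e, true)| ≤ B} = 0 := ae_iff.mp hBae
    rw [ae_iff]
    have heq : {e : EnvSpace d K | ¬ |g (shiftT j e, true)| ≤ B}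
        = shiftT j ⁻¹' {e : EnvSpace d K | ¬ |g (e, true)| ≤ B} := rfl
    rw [heq, hPinv j _ hA]
    exact h0
  have hs0 : ∀ e : EnvSpace d K, shiftT (0 : ZLat d) e = e := by
    intro e; funext i; simp [shiftT]
  -- the contraction constant
  set θ : ℝ := 1 - (2/3) * qs a lam K with hθdef
  have hθ0 : 0 ≤ θ := by rw [hθdef]; linarith
  have hθ1 : θ < 1 := by rw [hθdef]; linarith
  -- key contraction step
  have key : ∀ B : ℝ, 0 ≤ B → (∀ᵐ e ∂Pbar, |g (e, true)| ≤ B) →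
      ∀ᵐ e ∂Pbar, |g (e, true)| ≤ θ * B := by
    intro B hB0 hBae
    have hj : ∀ᵐ e ∂Pbar, ∀ j : ZLat d, |g (shiftT j e, true)| ≤ B :=
      ae_all_iff.mpr (hshift B hBae)
    filter_upwards [haet, haef, hj] with e ht hf hj
    obtain ⟨hω0, hω2⟩ := hω e
    have hg1B : |g (e, true)| ≤ B := by
      have := hj 0; rwa [hs0 e] at this
    simp only [Rop] at ht hf
    -- bound on the dormant slice
    have heq2 : (2 - omegaE a lam e 0) * g (e, false)
        = - (omegaE a lam e 0 * g (e, true)) := by linear_combination hf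
    have habs : (2 - omegaE a lam e 0) * |g (e, false)|
        = omegaE a lam e 0 * |g (e, true)| := by
      have h := congrArg abs heq2
      rwa [abs_mul, abs_neg, abs_mul,
        abs_of_pos (by linarith : (0:ℝ) < 2 - omegaE a lam e 0), abs_of_pos hω0] at h
    have p1 : omegaE a lam e 0 * |g (e, true)| ≤ (1/2) * |g (e, true)| :=
      mul_le_mul_of_nonneg_right hω2 (abs_nonneg _)
    have p2 : omegaE a lam e 0 * |g (e, false)| ≤ (1/2) * |g (e, false)| :=
      mul_le_mul_of_nonneg_right hω2 (abs_nonneg _)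
    have hg0 : |g (e, false)| ≤ B / 3 := by
      nlinarith [abs_nonneg (g (e, false))]
    -- bound on the sum
    have hTsummand : ∀ j, ‖phat a lam K j * g (shiftT j e, true)‖ ≤ phat a lam K j * B := by
      intro j
      rw [norm_mul, Real.norm_eq_abs, Real.norm_eq_abs, abs_of_nonneg (hp_nonneg j)]
      exact mul_le_mul_of_nonneg_left (hj j) (hp_nonneg j)
    have hnorm : Summable (fun j => ‖phat a lam K j * g (shiftT j e, true)‖) :=
      Summable.of_nonneg_of_le (fun j => norm_nonneg _) hTsummand (hp_sum.mul_right B)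
    have hTb : |∑' j : ZLat d, phat a lam K j * g (shiftT j e, true)| ≤ B := by
      calc |∑' j : ZLat d, phat a lam K j * g (shiftT j e, true)|
          ≤ ∑' j : ZLat d, ‖phat a lam K j * g (shiftT j e, true)‖ :=
            norm_tsum_le_tsum_norm hnorm
        _ ≤ ∑' j : ZLat d, phat a lam K j * B :=
            Summable.tsum_le_tsum hTsummand hnorm (hp_sum.mul_right B)
        _ = B := by rw [tsum_mul_right, hp_tsum, one_mul]
    -- combine
    have habs1 : |g (e, true)| = |qs a lam K * g (e, false)
        + (1 - qs a lam K) * ∑' j : ZLat d, phat a lam K j * g (shiftT j e, true)| := by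
      rw [← abs_neg (g (e, true)), ← ht]
    rw [habs1]
    calc |qs a lam K * g (e, false)
        + (1 - qs a lam K) * ∑' j : ZLat d, phat a lam K j * g (shiftT j e, true)|
        ≤ |qs a lam K * g (e, false)|
          + |(1 - qs a lam K) * ∑' j : ZLat d, phat a lam K j * g (shiftT j e, true)| :=
          abs_add_le _ _
      _ = qs a lam K * |g (e, false)|
          + (1 - qs a lam K) * |∑' j : ZLat d, phat a lam K j * g (shiftT j e, true)| := by
          rw [abs_mul, abs_mul, abs_of_pos hq0, abs_of_nonneg (by linarith : 0 ≤ 1 - qs a lam K)]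
      _ ≤ qs a lam K * (B / 3) + (1 - qs a lam K) * B := by
          gcongr
      _ = θ * B := by rw [hθdef]; ring
  -- iterate the contraction
  set C₀ : ℝ := max C 0 with hC₀def
  have hC₀0 : 0 ≤ C₀ := le_max_right _ _
  have hind : ∀ n : ℕ, ∀ᵐ e ∂Pbar, |g (e, true)| ≤ θ ^ n * C₀ := by
    intro n
    induction n with
    | zero =>
      refine ae_of_all _ fun e => ?_
      rw [pow_zero, one_mul, hC₀def]
      exact le_trans (hC (e, true)) (le_max_left C 0)
    | succ n ih =>
      have h := key (θ ^ n * C₀) (by positivity) ih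
      refine h.mono fun e he => ?_
      calc |g (e, true)| ≤ θ * (θ ^ n * C₀) := he
        _ = θ ^ (n + 1) * C₀ := by ring
  -- conclude g(·,true) = 0 a.e.
  have hlim1 : ∀ᵐ e ∂Pbar, g (e, true) = 0 := by
    have hall : ∀ᵐ e ∂Pbar, ∀ n : ℕ, |g (e, true)| ≤ θ ^ n * C₀ := ae_all_iff.mpr hind
    filter_upwards [hall] with e he
    have htend : Tendsto (fun n : ℕ => θ ^ n * C₀) atTop (nhds 0) := by
      have h := (tendsto_pow_atTop_nhds_zero_of_lt_one hθ0 hθ1).mul_const C₀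
      simpa using h
    have hle : |g (e, true)| ≤ 0 := ge_of_tendsto htend (Eventually.of_forall he)
    exact abs_nonpos_iff.mp hle
  -- conclude g(·,false) = 0 a.e.
  have hlim0 : ∀ᵐ e ∂Pbar, g (e, false) = 0 := by
    filter_upwards [haef, hlim1] with e hf h1
    obtain ⟨hω0, hω2⟩ := hω e
    simp only [Rop] at hf
    rw [h1] at hf
    have h2 : (2 - omegaE a lam e 0) * g (e, false) = 0 := by linear_combination hf
    have h3 : (2:ℝ) - omegaE a lam e 0 ≠ 0 := by linarith
    exact (mul_eq_zero.mp h2).resolve_left h3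
  -- assemble the conclusion
  have hSt : MeasurableSet {e : EnvSpace d K | ¬ g (e, true) = 0} :=
    (mg1 (measurableSet_singleton 0)).compl
  have hSf : MeasurableSet {e : EnvSpace d K | ¬ g (e, false) = 0} :=
    (mg0 (measurableSet_singleton 0)).compl
  have h1 : Pbar {e : EnvSpace d K | ¬ g (e, true) = 0} = 0 := ae_iff.mp hlim1
  have h0 : Pbar {e : EnvSpace d K | ¬ g (e, false) = 0} = 0 := ae_iff.mp hlim0
  rw [ae_iff]
  have hsub : {x : EnvSpace d K × Bool | ¬ g x = 0}
      ⊆ ({e : EnvSpace d K | ¬ g (e, true) = 0} ×ˢ ({true} : Set Bool))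
        ∪ ({e : EnvSpace d K | ¬ g (e, false) = 0} ×ˢ ({false} : Set Bool)) := by
    rintro ⟨e, b⟩ hx
    cases b
    · right; exact ⟨hx, rfl⟩
    · left; exact ⟨hx, rfl⟩
  have hQt : Q ({e : EnvSpace d K | ¬ g (e, true) = 0} ×ˢ ({true} : Set Bool)) = 0 := by
    rw [hQ1 _ hSt, h1, mul_zero]
  have hQf : Q ({e : EnvSpace d K | ¬ g (e, false) = 0} ×ˢ ({false} : Set Bool)) = 0 := by
    rw [hQ0 _ hSf]
    have : ∫ e' in {e : EnvSpace d K | ¬ g (e, false) = 0},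
        Msize e' 0 / Nsize e' 0 ∂Pbar = 0 := by
      rw [Measure.restrict_eq_zero.mpr h0]
      exact integral_zero_measure _
    rw [this, mul_zero, ENNReal.ofReal_zero]
  refine le_antisymm ?_ (zero_le)
  calc Q {x : EnvSpace d K × Bool | ¬ g x = 0}
      ≤ Q (({e : EnvSpace d K | ¬ g (e, true) = 0} ×ˢ ({true} : Set Bool))
        ∪ ({e : EnvSpace d K | ¬ g (e, false) = 0} ×ˢ ({false} : Set Bool))) :=
        measure_mono hsub
    _ ≤ Q ({e : EnvSpace d K | ¬ g (e, true) = 0} ×ˢ ({true} : Set Bool))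
        + Q ({e : EnvSpace d K | ¬ g (e, false) = 0} ×ˢ ({false} : Set Bool)) :=
        measure_union_le _ _
    _ = 0 := by rw [hQt, hQf, add_zero]
end

section
/- Constant harmonic functions for the single-particle dual: let a be a migration kernel, λ ∈ (0,∞), and K = (K_i)_{i∈ℤ^d} a family of positive reals. If f : ℤ^d × {0,1} → ℝ is bounded and satisfies, for every (i,α) ∈ ℤ^d × {0,1}, (α·λ + (1−α)·λ·K_i)·(f(i,1−α) − f(i,α)) + α·Σ_{j∈ℤ^d} a(i,j)·(f(j,α) − f(i,α)) = 0 (i.e. f is annihilated by the generator of the single-particle dual process), then f is constant. -/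
open MeasureTheory Filter

/-- Auxiliary: summability of a nonneg summable weight times a bounded function. -/
lemma summable_mul_bdd' {ι : Type*} (p h : ι → ℝ) (hp : Summable p) (hp0 : ∀ i, 0 ≤ p i)
    (C : ℝ) (hb : ∀ i, |h i| ≤ C) : Summable (fun i => p i * h i) := by
  apply Summable.of_abs
  apply Summable.of_nonneg_of_le (fun i => abs_nonneg _) (fun i => ?_) (hp.mul_right C)
  rw [abs_mul, abs_of_nonneg (hp0 i)]
  exact mul_le_mul_of_nonneg_left (hb i) (hp0 i)

/-- Bounded harmonic functions of the single-particle dual are constant. -/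
theorem constant_harmonics_single_particle_dual
    (d K : ℕ) (hd : 1 ≤ d) (hK : 2 ≤ K)
    (a : ZLat d → ZLat d → ℝ) (lam : ℝ) (hlam : 0 < lam)
    (ha_nonneg : ∀ i j, 0 ≤ a i j)
    (ha_transl : ∀ i j, a i j = a 0 (j - i))
    (ha_irr : ∀ i : ZLat d, ∃ n : ℕ, 0 < convPow (a 0) n i)
    (ha_sum : Summable (a 0))
    (ha00 : 0 < a 0 0)
    (Kfam : ZLat d → ℝ) (hKfam : ∀ i, 0 < Kfam i)
    (f : ZLat d × Bool → ℝ) (hfb : ∃ C, ∀ x, |f x| ≤ C)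
    (hharm : ∀ (i : ZLat d) (α : Bool),
      ((if α then lam else lam * Kfam i) * (f (i, !α) - f (i, α)) +
        (if α then (1:ℝ) else 0) * ∑' j : ZLat d, a i j * (f (j, α) - f (i, α))) = 0) :
    ∀ x y : ZLat d × Bool, f x = f y := by
  obtain ⟨C0, hC0⟩ := hfb
  have hC0nn : 0 ≤ C0 := le_trans (abs_nonneg _) (hC0 (0, true))
  set g : ZLat d → ℝ := fun i => f (i, true) with hgdef
  have hCg : ∀ i, |g i| ≤ C0 := fun i => hC0 _
  -- Step 1: the two layers agree.
  have hflip : ∀ i, f (i, false) = f (i, true) := by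
    intro i
    have h := hharm i false
    simp only [Bool.not_false, if_neg Bool.false_ne_true, zero_mul, add_zero] at h
    have hne : lam * Kfam i ≠ 0 := ne_of_gt (mul_pos hlam (hKfam i))
    have := (mul_eq_zero.mp h).resolve_left hne
    linarith [sub_eq_zero.mp this]
  -- Step 2: g is harmonic.
  have hharm_g : ∀ i, (∑' j : ZLat d, a i j * (g j - g i)) = 0 := by
    intro i
    have h := hharm i true
    simp only [Bool.not_true, reduceIte, one_mul, hflip i] at h
    have : f (i, true) - f (i, true) = 0 := sub_self _
    rw [this, mul_zero, zero_add] at h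
    exact h
  -- Basic summability facts.
  have hsa : ∀ i : ZLat d, Summable (fun j => a i j) := by
    intro i
    have he : (fun j => a i j) = fun j => a 0 ((Equiv.subRight i) j) := by
      funext j; exact ha_transl i j
    rw [he]
    exact ((Equiv.subRight i).summable_iff (f := a 0)).mpr ha_sum
  set A : ℝ := ∑' j : ZLat d, a 0 j with hAdef
  have hA : 0 < A := lt_of_lt_of_le ha00 (Summable.le_tsum ha_sum 0 fun j _ => ha_nonneg 0 j)
  have hsA : ∀ i, (∑' j : ZLat d, a i j) = A := by
    intro i
    have he : (fun j => a i j) = fun j => a 0 ((Equiv.subRight i) j) := by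
      funext j; exact ha_transl i j
    rw [he]
    exact (Equiv.subRight i).tsum_eq (a 0)
  set q : ZLat d → ℝ := fun j => a 0 j / A with hqdef
  have hq0 : ∀ j, 0 ≤ q j := fun j => div_nonneg (ha_nonneg 0 j) hA.le
  have hqsum : Summable q := ha_sum.div_const A
  have hqtot : (∑' j : ZLat d, q j) = 1 := by
    simp only [hqdef]
    rw [tsum_div_const]
    exact div_self hA.ne'
  -- g is harmonic in the normalized form.
  have hH : ∀ i, g i = ∑' j : ZLat d, q j * g (i + j) := by
    intro i
    have S1 : Summable (fun j => a i j * g j) :=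
      summable_mul_bdd' _ _ (hsa i) (fun j => ha_nonneg i j) C0 hCg
    have S2 : Summable (fun j => a i j * g i) := (hsa i).mul_right (g i)
    have h0 : (∑' j : ZLat d, a i j * g j) = A * g i := by
      have := hharm_g i
      have heq : (fun j => a i j * (g j - g i)) =
          fun j => a i j * g j - a i j * g i := by
        funext j; ring
      rw [heq, Summable.tsum_sub S1 S2, tsum_mul_right, hsA i] at this
      linarith
    have h1 : (∑' j : ZLat d, a 0 j * g (i + j)) = A * g i := by
      have := (Equiv.addLeft i).tsum_eq (fun j => a i j * g j)
      rw [← this] at h0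
      rw [← h0]
      refine tsum_congr fun j => ?_
      have : a i (i + j) = a 0 j := by rw [ha_transl i (i + j), add_sub_cancel_left]
      simp only [Equiv.coe_addLeft]
      rw [this]
    have : (∑' j : ZLat d, q j * g (i + j)) =
        (∑' j : ZLat d, a 0 j * g (i + j)) / A := by
      rw [← tsum_div_const]
      refine tsum_congr fun j => ?_
      simp only [hqdef]; ring
    rw [this, h1]
    field_simp
  -- nonnegativity of convolution powers of q
  have hcp0 : ∀ n j, 0 ≤ convPow q n j := by
    intro n
    induction n with
    | zero => intro j; simp only [convPow]; split <;> norm_num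
    | succ n ih =>
      intro j
      refine tsum_nonneg fun k => mul_nonneg (ih k) (hq0 _)
  -- scaling of convolution powers
  have hscale : ∀ n i, convPow q n i = convPow (a 0) n i / A ^ n := by
    intro n
    induction n with
    | zero => intro i; simp only [convPow, pow_zero]; split <;> norm_num
    | succ n ih =>
      intro i
      show (∑' j : ZLat d, convPow q n j * q (i - j))
          = (∑' j : ZLat d, convPow (a 0) n j * a 0 (i - j)) / A ^ (n + 1)
      rw [← tsum_div_const]
      refine tsum_congr fun j => ?_
      rw [ih j]
      simp only [hqdef]
      rw [div_mul_div_comm, pow_succ]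
  have hq_irr : ∀ t : ZLat d, ∃ n, 0 < convPow q n t := by
    intro t
    obtain ⟨n, hn⟩ := ha_irr t
    exact ⟨n, by rw [hscale n t]; exact div_pos hn (pow_pos hA n)⟩
  -- Main step: g (i + t) ≤ g i for all i, t.
  have hmono : ∀ (t : ZLat d) (i : ZLat d), g (i + t) ≤ g i := by
    intro t
    set u : ZLat d → ℝ := fun i => g (i + t) - g i with hudef
    have hub : ∀ i, |u i| ≤ 2 * C0 := by
      intro i
      have h1 := hCg (i + t); have h2 := hCg i
      rw [abs_le] at h1 h2 ⊢
      constructor <;> simp only [hudef] <;> [linarith; linarith]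
    have hbdd : BddAbove (Set.range u) := by
      refine ⟨2 * C0, ?_⟩
      rintro x ⟨i, rfl⟩
      exact le_of_abs_le (hub i)
    set s : ℝ := ⨆ i, u i with hsdef
    have hus : ∀ i, u i ≤ s := fun i => le_ciSup hbdd i
    have husum : ∀ i, Summable (fun j => q j * u (i + j)) :=
      fun i => summable_mul_bdd' _ _ hqsum hq0 (2 * C0) (fun j => hub _)
    have hgsum : ∀ i, Summable (fun j => q j * g (i + j)) :=
      fun i => summable_mul_bdd' _ _ hqsum hq0 C0 (fun j => hCg _)
    have huH : ∀ i, u i = ∑' j : ZLat d, q j * u (i + j) := by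
      intro i
      have e1 : (fun j => q j * u (i + j)) =
          fun j => q j * g ((i + t) + j) - q j * g (i + j) := by
        funext j
        simp only [hudef]
        have : i + j + t = i + t + j := by abel
        rw [this]; ring
      rw [e1, Summable.tsum_sub ?_ (hgsum i)]
      · rw [← hH (i + t), ← hH i]
      · have := hgsum (i + t); exact this
    -- one-step propagation
    have hone : ∀ k, 0 < q k → ∀ i, q k * (s - u (i + k)) ≤ s - u i := by
      intro k hk i
      have hsumF : Summable (fun j => q j * (s - u (i + j))) := by
        have e : (fun j => q j * (s - u (i + j))) =
            fun j => q j * s - q j * u (i + j) := by funext j; ring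
        rw [e]
        exact (hqsum.mul_right s).sub (husum i)
      have htF : (∑' j : ZLat d, q j * (s - u (i + j))) = s - u i := by
        have e : (fun j => q j * (s - u (i + j))) =
            fun j => q j * s - q j * u (i + j) := by funext j; ring
        rw [e, Summable.tsum_sub (hqsum.mul_right s) (husum i), tsum_mul_right, hqtot,
          one_mul, ← huH i]
      have := Summable.le_tsum hsumF k
        (fun j _ => mul_nonneg (hq0 j) (by linarith [hus (i + j)]))
      rw [htF] at this
      exact this
    -- propagation along convolution powers
    have hpath : ∀ n (t' : ZLat d), 0 < convPow q n t' →
        ∃ c, 0 < c ∧ ∀ i, c * (s - u (i + t')) ≤ s - u i := by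
      intro n
      induction n with
      | zero =>
        intro t' ht'
        by_cases h : t' = 0
        · subst h
          exact ⟨1, one_pos, fun i => by rw [add_zero, one_mul]⟩
        · simp only [convPow, if_neg h] at ht'
          exact absurd ht' (lt_irrefl 0)
      | succ n ih =>
        intro t' ht'
        have hdef : convPow q (n + 1) t' =
            ∑' j : ZLat d, convPow q n j * q (t' - j) := rfl
        have hex : ∃ j, 0 < convPow q n j * q (t' - j) := by
          by_contra hcon
          push_neg at hcon
          have hz : ∀ j, convPow q n j * q (t' - j) = 0 :=
            fun j => le_antisymm (hcon j) (mul_nonneg (hcp0 n j) (hq0 _))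
          rw [hdef] at ht'
          rw [tsum_congr hz, tsum_zero] at ht'
          exact absurd ht' (lt_irrefl 0)
        obtain ⟨j, hj⟩ := hex
        have h1 : 0 < convPow q n j := by
          rcases mul_pos_iff.mp hj with ⟨h1, _⟩ | ⟨h1, _⟩
          · exact h1
          · exact absurd h1 (not_lt.mpr (hcp0 n j))
        have h2 : 0 < q (t' - j) := by
          rcases mul_pos_iff.mp hj with ⟨_, h2⟩ | ⟨_, h2⟩
          · exact h2
          · exact absurd h2 (not_lt.mpr (hq0 _))
        obtain ⟨c, hc, hstep⟩ := ih j h1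
        refine ⟨c * q (t' - j), mul_pos hc h2, fun i => ?_⟩
        have e1 := hone (t' - j) h2 (i + j)
        have e2 := hstep i
        have e3 : i + j + (t' - j) = i + t' := by abel
        rw [e3] at e1
        calc c * q (t' - j) * (s - u (i + t'))
            = c * (q (t' - j) * (s - u (i + t'))) := by ring
          _ ≤ c * (s - u (i + j)) := mul_le_mul_of_nonneg_left e1 hc.le
          _ ≤ s - u i := e2
    obtain ⟨n, hn⟩ := hq_irr t
    obtain ⟨c, hc, hprop⟩ := hpath n t hn
    -- the multi-step lower bound
    have hms : ∀ m : ℕ, ∀ ε : ℝ, 0 < ε → ∃ i, s - u i < ε ∧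
        (m : ℝ) * (s - ε) ≤ g i - g (i - m • t) := by
      intro m
      induction m with
      | zero =>
        intro ε hε
        obtain ⟨i, hi⟩ := exists_lt_of_lt_ciSup
          (show s - ε < ⨆ i, u i from by rw [← hsdef]; linarith)
        exact ⟨i, by linarith, by simp⟩
      | succ m ih =>
        intro ε hε
        obtain ⟨i, hi1, hi2⟩ := ih (min ε (c * ε))
          (lt_min hε (mul_pos hc hε))
        refine ⟨i + t, ?_, ?_⟩
        · have h1 := hprop i
          have h2 : c * (s - u (i + t)) < c * ε :=
            lt_of_le_of_lt h1 (lt_of_lt_of_le hi1 (min_le_right _ _))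
          exact lt_of_mul_lt_mul_left (by linarith) hc.le
        · have e : i + t - (m + 1) • t = i - m • t := by
            rw [succ_nsmul]; abel
          rw [e]
          have hui : s - ε ≤ u i := by
            have := min_le_left ε (c * ε); linarith
          have hme : (m : ℝ) * (s - ε) ≤ (m : ℝ) * (s - min ε (c * ε)) := by
            apply mul_le_mul_of_nonneg_left _ (Nat.cast_nonneg m)
            have := min_le_left ε (c * ε); linarith
          have hut : u i = g (i + t) - g i := rfl
          push_cast
          nlinarith [hi2]
    -- conclude s ≤ 0
    have hs0 : s ≤ 0 := by
      by_contra hcon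
      push_neg at hcon
      obtain ⟨m, hm⟩ := exists_nat_gt (4 * C0 / s)
      obtain ⟨i, _, h2⟩ := hms m (s / 2) (by linarith)
      have hb1 : g i - g (i - m • t) ≤ 2 * C0 := by
        have h1 := le_of_abs_le (hCg i)
        have h2' := neg_le_of_abs_le (hCg (i - m • t))
        linarith
      have : (m : ℝ) * (s / 2) ≤ 2 * C0 := by
        have : s - s / 2 = s / 2 := by ring
        rw [this] at h2; linarith
      have hms' : (4 : ℝ) * C0 < (m : ℝ) * s := by
        have := (div_lt_iff₀ hcon).mp hm
        linarith
      nlinarith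
    intro i
    have := hus i
    simp only [hudef] at this
    linarith
  intro x y
  have hgconst : ∀ p r : ZLat d, g p = g r := by
    intro p r
    have h1 : g r ≤ g p := by
      have := hmono (r - p) p
      rwa [add_sub_cancel] at this
    have h2 : g p ≤ g r := by
      have := hmono (p - r) r
      rwa [add_sub_cancel] at this
    linarith
  obtain ⟨i, b⟩ := x
  obtain ⟨j, b'⟩ := y
  have hf : ∀ (i : ZLat d) (b : Bool), f (i, b) = g i := by
    intro i b
    cases b
    · exact hflip i
    · rfl
  rw [hf i b, hf j b']
  exact hgconst i j
end

section
/- Bounded nonnegative subharmonic functions of an irreducible recurrent random walk on ℤ^d are constant: let p be a probability distribution on ℤ^d that is irreducible (for every i ∈ ℤ^d there exists n ∈ ℕ with p^{⋆n}(i) > 0) and recurrent (Σ_{n≥0} p^{⋆n}(0) = ∞). If f : ℤ^d → ℝ is bounded, nonnegative, and satisfies Σ_{j∈ℤ^d} p(j)·f(i+j) ≥ f(i) for every i ∈ ℤ^d, then f is constant. -/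
open MeasureTheory Filter

section AuxCD

open scoped ENNReal

noncomputable def Qn {d : ℕ} (q : ZLat d → ℝ≥0∞) : ℕ → ZLat d → ℝ≥0∞
  | 0 => fun i => if i = 0 then 1 else 0
  | n + 1 => fun i => ∑' j : ZLat d, Qn q n j * q (i - j)

variable {d : ℕ} {q : ZLat d → ℝ≥0∞}

lemma Qn_sum (hq : ∑' j, q j = 1) : ∀ n, ∑' i, Qn q n i = 1 := by
  intro n
  induction n with
  | zero =>
      rw [tsum_eq_single (0 : ZLat d) (by intro b hb; simp [Qn, hb])]
      simp [Qn]
  | succ n ih =>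
      rw [show Qn q (n+1) = fun i => ∑' j : ZLat d, Qn q n j * q (i - j) from rfl]
      rw [ENNReal.tsum_comm]
      calc ∑' j, ∑' i, Qn q n j * q (i - j)
          = ∑' j, Qn q n j * ∑' i, q (i - j) := by
            refine tsum_congr fun j => ?_
            rw [ENNReal.tsum_mul_left]
        _ = 1 := by
            have : ∀ j : ZLat d, ∑' i, q (i - j) = 1 := by
              intro j
              rw [← (Equiv.subRight j).tsum_eq q] at hq
              exact hq
            simp only [this, mul_one, ih]

lemma Qn_chapman : ∀ (m k : ℕ) (i : ZLat d),
    Qn q (k + m) i = ∑' j : ZLat d, Qn q k j * Qn q m (i - j) := by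
  intro m
  induction m with
  | zero =>
      intro k i
      rw [tsum_eq_single i (by intro b hb; simp [Qn, sub_eq_zero, (Ne.symm hb)])]
      simp [Qn]
  | succ m ih =>
      intro k i
      show (∑' j : ZLat d, Qn q (k + m) j * q (i - j)) = _
      calc (∑' j : ZLat d, Qn q (k + m) j * q (i - j))
          = ∑' j : ZLat d, ∑' l : ZLat d, Qn q k l * Qn q m (j - l) * q (i - j) := by
            refine tsum_congr fun j => ?_
            rw [ih k j, ENNReal.tsum_mul_right]
        _ = ∑' l : ZLat d, ∑' j : ZLat d, Qn q k l * Qn q m (j - l) * q (i - j) :=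
            ENNReal.tsum_comm
        _ = ∑' l : ZLat d, Qn q k l * Qn q (m+1) (i - l) := by
            refine tsum_congr fun l => ?_
            calc (∑' j : ZLat d, Qn q k l * Qn q m (j - l) * q (i - j))
                = ∑' j : ZLat d, Qn q k l * (Qn q m (j - l) * q (i - j)) := by
                  refine tsum_congr fun j => mul_assoc _ _ _
              _ = Qn q k l * ∑' j : ZLat d, Qn q m (j - l) * q (i - j) :=
                  ENNReal.tsum_mul_left
              _ = Qn q k l * Qn q (m+1) (i - l) := by
                  congr 1
                  rw [show Qn q (m+1) (i - l) = ∑' j' : ZLat d, Qn q m j' * q (i - l - j') from rfl]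
                  rw [← (Equiv.addRight l).tsum_eq (fun j => Qn q m (j - l) * q (i - j))]
                  refine tsum_congr fun j' => ?_
                  simp only [Equiv.coe_addRight]
                  have h1 : j' + l - l = j' := by abel
                  have h2 : i - (j' + l) = i - l - j' := by abel
                  rw [h1, h2]

lemma convPow_facts {p : ZLat d → ℝ} (hp0 : ∀ i, 0 ≤ p i) (hp1 : HasSum p 1) :
    ∀ n, (∀ i, 0 ≤ convPow p n i) ∧ Summable (convPow p n) ∧
      ∀ i, ENNReal.ofReal (convPow p n i) = Qn (fun j => ENNReal.ofReal (p j)) n i := by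
  set q : ZLat d → ℝ≥0∞ := fun j => ENNReal.ofReal (p j) with hqdef
  have hq1 : ∑' j, q j = 1 := by
    rw [hqdef, ← ENNReal.ofReal_tsum_of_nonneg hp0 hp1.summable, hp1.tsum_eq,
      ENNReal.ofReal_one]
  have hple : ∀ i, p i ≤ 1 := fun i => le_hasSum hp1 i fun j _ => hp0 j
  intro n
  induction n with
  | zero =>
      refine ⟨fun i => by dsimp [convPow]; split <;> norm_num, ?_, fun i => ?_⟩
      · refine summable_of_ne_finset_zero (s := {(0 : ZLat d)}) ?_
        intro b hb; simp at hb; simp [convPow, hb]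
      · dsimp [convPow, Qn]; split <;> simp
  | succ n ih =>
      obtain ⟨h0, hs, hof⟩ := ih
      have hgs : ∀ i : ZLat d, Summable (fun j => convPow p n j * p (i - j)) := by
        intro i
        refine hs.of_nonneg_of_le (fun j => mul_nonneg (h0 j) (hp0 _)) fun j => ?_
        exact mul_le_of_le_one_right (h0 j) (hple _)
      have h0' : ∀ i, 0 ≤ convPow p (n+1) i := fun i =>
        tsum_nonneg fun j => mul_nonneg (h0 j) (hp0 _)
      have hof' : ∀ i, ENNReal.ofReal (convPow p (n+1) i) = Qn q (n+1) i := by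
        intro i
        show ENNReal.ofReal (∑' j : ZLat d, convPow p n j * p (i - j)) = _
        rw [ENNReal.ofReal_tsum_of_nonneg (fun j => mul_nonneg (h0 j) (hp0 _)) (hgs i)]
        exact tsum_congr fun j => by rw [ENNReal.ofReal_mul (h0 j), hof j]
      refine ⟨h0', ?_, hof'⟩
      have hne : (∑' i, ENNReal.ofReal (convPow p (n+1) i)) ≠ ⊤ := by
        rw [tsum_congr hof', Qn_sum hq1]; exact ENNReal.one_ne_top
      have := ENNReal.summable_toReal hne
      exact this.congr fun i => ENNReal.toReal_ofReal (h0' i)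

lemma recAll {q : ZLat d → ℝ≥0∞} (hrec : ∑' n, Qn q n 0 = ⊤)
    (i : ZLat d) (m : ℕ) (hm : 0 < Qn q m i) : ∑' n, Qn q n i = ⊤ := by
  have hge : ∀ k, Qn q k 0 * Qn q m i ≤ Qn q (k + m) i := by
    intro k
    rw [Qn_chapman m k i]
    have h := ENNReal.le_tsum (f := fun j : ZLat d => Qn q k j * Qn q m (i - j)) 0
    simpa using h
  have h1 : (⊤ : ℝ≥0∞) ≤ ∑' k, Qn q (k + m) i := by
    calc (⊤ : ℝ≥0∞) = (∑' k, Qn q k 0) * Qn q m i := by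
          rw [hrec, ENNReal.top_mul hm.ne']
      _ = ∑' k, Qn q k 0 * Qn q m i := (ENNReal.tsum_mul_right (f := fun k => Qn q k 0)).symm
      _ ≤ _ := ENNReal.tsum_le_tsum hge
  have h2 : ∑' k, Qn q (k + m) i ≤ ∑' k, Qn q k i := by
    exact ENNReal.tsum_comp_le_tsum_of_injective (add_left_injective m) (fun k => Qn q k i)
  exact top_le_iff.mp (h1.trans h2)

lemma harmonic_of_subharmonic {p : ZLat d → ℝ} (hp0 : ∀ i, 0 ≤ p i) (hp1 : HasSum p 1)
    (hirr : ∀ i : ZLat d, ∃ n : ℕ, 0 < convPow p n i)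
    (hrec : ∑' n : ℕ, ENNReal.ofReal (convPow p n 0) = ⊤)
    {f : ZLat d → ℝ} {C : ℝ} (hfC : ∀ i, |f i| ≤ C) (hf0 : ∀ i, 0 ≤ f i)
    (hsub : ∀ i : ZLat d, f i ≤ ∑' j : ZLat d, p j * f (i + j)) :
    ∀ i : ZLat d, (∑' j : ZLat d, p j * f (i + j)) = f i := by
  set q : ZLat d → ℝ≥0∞ := fun j => ENNReal.ofReal (p j) with hqdef
  have hq1 : ∑' j, q j = 1 := by
    rw [hqdef, ← ENNReal.ofReal_tsum_of_nonneg hp0 hp1.summable, hp1.tsum_eq,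
      ENNReal.ofReal_one]
  have hC0 : 0 ≤ C := le_trans (abs_nonneg _) (hfC 0)
  have hfle : ∀ i, f i ≤ C := fun i => (abs_le.mp (hfC i)).2
  have hsumf : ∀ y : ZLat d, Summable (fun j => p j * f (y + j)) := by
    intro y
    refine (hp1.summable.mul_right C).of_nonneg_of_le
      (fun j => mul_nonneg (hp0 j) (hf0 _)) fun j => ?_
    exact mul_le_mul_of_nonneg_left (hfle _) (hp0 j)
  set F : ZLat d → ℝ≥0∞ := fun i => ENNReal.ofReal (f i) with hFdef
  set S : ZLat d → ℝ≥0∞ := fun i => ∑' j : ZLat d, q j * F (i + j) with hSdef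
  have hofS : ∀ i, ENNReal.ofReal (∑' j : ZLat d, p j * f (i + j)) = S i := by
    intro i
    rw [ENNReal.ofReal_tsum_of_nonneg (fun j => mul_nonneg (hp0 j) (hf0 _)) (hsumf i)]
    exact tsum_congr fun j => ENNReal.ofReal_mul (hp0 j)
  have hFS : ∀ i, F i ≤ S i := fun i => by
    rw [← hofS i]; exact ENNReal.ofReal_le_ofReal (hsub i)
  have hFC : ∀ i, F i ≤ ENNReal.ofReal C := fun i => ENNReal.ofReal_le_ofReal (hfle i)
  have hSC : ∀ i, S i ≤ ENNReal.ofReal C := by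
    intro i
    calc S i ≤ ∑' j : ZLat d, q j * ENNReal.ofReal C :=
          ENNReal.tsum_le_tsum fun j => mul_le_mul_right (hFC _) _
      _ = (∑' j, q j) * ENNReal.ofReal C := ENNReal.tsum_mul_right
      _ = ENNReal.ofReal C := by rw [hq1, one_mul]
  -- the averaged functions
  set A : ℕ → ZLat d → ℝ≥0∞ := fun n i => ∑' j : ZLat d, Qn q n j * F (i + j) with hAdef
  have hA0 : ∀ i, A 0 i = F i := by
    intro i
    show (∑' j : ZLat d, Qn q 0 j * F (i + j)) = F i
    rw [tsum_eq_single (0 : ZLat d) (by intro b hb; simp [Qn, hb])]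
    simp [Qn]
  have hAC : ∀ n i, A n i ≤ ENNReal.ofReal C := by
    intro n i
    calc A n i ≤ ∑' j : ZLat d, Qn q n j * ENNReal.ofReal C :=
          ENNReal.tsum_le_tsum fun j => mul_le_mul_right (hFC _) _
      _ = (∑' j, Qn q n j) * ENNReal.ofReal C := ENNReal.tsum_mul_right
      _ = ENNReal.ofReal C := by rw [Qn_sum hq1, one_mul]
  have hAstep : ∀ n i, A (n + 1) i = ∑' l : ZLat d, Qn q n l * S (i + l) := by
    intro n i
    calc A (n+1) i
        = ∑' j : ZLat d, (∑' l : ZLat d, Qn q n l * q (j - l)) * F (i + j) := rfl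
      _ = ∑' j : ZLat d, ∑' l : ZLat d, Qn q n l * q (j - l) * F (i + j) := by
          refine tsum_congr fun j => ?_
          rw [ENNReal.tsum_mul_right]
      _ = ∑' l : ZLat d, ∑' j : ZLat d, Qn q n l * q (j - l) * F (i + j) :=
          ENNReal.tsum_comm
      _ = ∑' l : ZLat d, Qn q n l * S (i + l) := by
          refine tsum_congr fun l => ?_
          calc (∑' j : ZLat d, Qn q n l * q (j - l) * F (i + j))
              = ∑' j : ZLat d, Qn q n l * (q (j - l) * F (i + j)) := by
                exact tsum_congr fun j => mul_assoc _ _ _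
            _ = Qn q n l * ∑' j : ZLat d, q (j - l) * F (i + j) := ENNReal.tsum_mul_left
            _ = Qn q n l * S (i + l) := by
                congr 1
                rw [hSdef]
                rw [← (Equiv.addRight l).tsum_eq (fun j => q (j - l) * F (i + j))]
                refine tsum_congr fun j' => ?_
                simp only [Equiv.coe_addRight]
                have h1 : j' + l - l = j' := by abel
                have h2 : i + (j' + l) = i + l + j' := by abel
                rw [h1, h2]
  -- suppose not harmonic at i₀
  intro i₀
  by_contra hne
  have hlt : f i₀ < ∑' j : ZLat d, p j * f (i₀ + j) := lt_of_le_of_ne (hsub i₀) (Ne.symm hne)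
  have hFlt : F i₀ < S i₀ := by
    rw [← hofS i₀, hFdef]
    exact (ENNReal.ofReal_lt_ofReal_iff_of_nonneg (hf0 i₀)).mpr hlt
  set δ : ℝ≥0∞ := S i₀ - F i₀ with hδdef
  have hδpos : 0 < δ := tsub_pos_of_lt hFlt
  have hSeq : F i₀ + δ = S i₀ := add_tsub_cancel_of_le hFlt.le
  have hkey : ∀ n, A n 0 + Qn q n i₀ * δ ≤ A (n + 1) 0 := by
    intro n
    rw [hAstep n 0]
    have hterm : ∀ l : ZLat d,
        Qn q n l * F (0 + l) + Qn q n l * (if l = i₀ then δ else 0) ≤ Qn q n l * S (0 + l) := by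
      intro l
      rw [← mul_add]
      refine mul_le_mul_right ?_ _
      by_cases hl : l = i₀
      · subst hl; rw [if_pos rfl, zero_add, hSeq]
      · rw [if_neg hl, add_zero, zero_add]; exact hFS l
    calc A n 0 + Qn q n i₀ * δ
        = (∑' l : ZLat d, Qn q n l * F (0 + l))
          + ∑' l : ZLat d, Qn q n l * (if l = i₀ then δ else 0) := by
          congr 1
          rw [tsum_eq_single i₀ (by intro b hb; simp [hb])]
          simp
      _ = ∑' l : ZLat d, (Qn q n l * F (0 + l) + Qn q n l * (if l = i₀ then δ else 0)) :=
          ENNReal.tsum_add.symm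
      _ ≤ ∑' l : ZLat d, Qn q n l * S (0 + l) := ENNReal.tsum_le_tsum hterm
  have hpartial : ∀ n, (∑ k ∈ Finset.range n, Qn q k i₀) * δ ≤ ENNReal.ofReal C := by
    have hind : ∀ n, (∑ k ∈ Finset.range n, Qn q k i₀) * δ ≤ A n 0 := by
      intro n
      induction n with
      | zero => simp
      | succ n ih =>
          rw [Finset.sum_range_succ, add_mul]
          exact le_trans (add_le_add_left ih _) (hkey n)
    exact fun n => (hind n).trans (hAC n 0)
  -- but the series diverges
  have htot : ∑' k, Qn q k i₀ = ⊤ := by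
    obtain ⟨m, hm⟩ := hirr i₀
    have hrec' : ∑' n, Qn q n 0 = ⊤ := by
      rw [← hrec]
      exact tsum_congr fun n => ((convPow_facts hp0 hp1 n).2.2 0).symm
    refine recAll hrec' i₀ m ?_
    rw [← (convPow_facts hp0 hp1 m).2.2 i₀]
    exact ENNReal.ofReal_pos.mpr hm
  have : (⊤ : ℝ≥0∞) ≤ ENNReal.ofReal C := by
    calc (⊤ : ℝ≥0∞) = (∑' k, Qn q k i₀) * δ := by
          rw [htot, ENNReal.top_mul hδpos.ne']
      _ = (⨆ n, ∑ k ∈ Finset.range n, Qn q k i₀) * δ := by rw [ENNReal.tsum_eq_iSup_nat]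
      _ = ⨆ n, (∑ k ∈ Finset.range n, Qn q k i₀) * δ := by rw [ENNReal.iSup_mul]
      _ ≤ ENNReal.ofReal C := iSup_le hpartial
  exact (ENNReal.ofReal_ne_top) (top_le_iff.mp this)

lemma translation_le {p : ZLat d → ℝ} (hp0 : ∀ i, 0 ≤ p i) (hp1 : HasSum p 1)
    {f : ZLat d → ℝ} {C : ℝ} (hf0 : ∀ i, 0 ≤ f i) (hfC : ∀ i, f i ≤ C)
    (hharm : ∀ i : ZLat d, (∑' j : ZLat d, p j * f (i + j)) = f i)
    {a : ZLat d} (ha : 0 < p a) {σ : ℝ} (hσ : σ = 1 ∨ σ = -1) :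
    ∀ x : ZLat d, σ * (f (x + a) - f x) ≤ 0 := by
  have hC0 : 0 ≤ C := le_trans (hf0 0) (hfC 0)
  have hσσ : σ * σ = 1 := by rcases hσ with h | h <;> rw [h] <;> norm_num
  have hσabs : |σ| = 1 := by rcases hσ with h | h <;> rw [h] <;> norm_num
  set g : ZLat d → ℝ := fun x => σ * (f (x + a) - f x) with hgdef
  have hgb : ∀ x, |g x| ≤ 2 * C := by
    intro x
    rw [hgdef]
    calc |σ * (f (x + a) - f x)| = |σ| * |f (x + a) - f x| := abs_mul _ _
      _ ≤ 1 * (|f (x + a)| + |f x|) := by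
          rw [hσabs]
          exact mul_le_mul_of_nonneg_left (abs_sub _ _) zero_le_one
      _ ≤ 2 * C := by
          rw [one_mul, abs_of_nonneg (hf0 _), abs_of_nonneg (hf0 _)]
          linarith [hfC (x + a), hfC x]
  have hsummf : ∀ y : ZLat d, Summable (fun j => p j * f (y + j)) := by
    intro y
    refine (hp1.summable.mul_right C).of_nonneg_of_le
      (fun j => mul_nonneg (hp0 j) (hf0 _)) fun j => ?_
    exact mul_le_mul_of_nonneg_left (hfC _) (hp0 j)
  have hgharm : ∀ x : ZLat d, (∑' j : ZLat d, p j * g (x + j)) = g x := by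
    intro x
    have hfun : (fun j : ZLat d => p j * g (x + j))
        = fun j : ZLat d => σ * (p j * f ((x + a) + j) - p j * f (x + j)) := by
      funext j
      have hco : x + j + a = x + a + j := by abel
      rw [hgdef]
      dsimp only
      rw [hco]
      ring
    rw [hfun, tsum_mul_left, Summable.tsum_sub (hsummf (x + a)) (hsummf x), hharm, hharm]
  have hrange_ne : (Set.range g).Nonempty := ⟨g 0, ⟨0, rfl⟩⟩
  have hbdd : BddAbove (Set.range g) := by
    refine ⟨2 * C, ?_⟩
    rintro y ⟨x, rfl⟩
    exact (abs_le.mp (hgb x)).2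
  set s : ℝ := sSup (Set.range g) with hsdef
  have hgle : ∀ x, g x ≤ s := fun x => le_csSup hbdd ⟨x, rfl⟩
  have hxex : ∀ n : ℕ, ∃ x : ZLat d, s - 1 / (n + 1) < g x := by
    intro n
    have hlt : s - 1 / (n + 1) < s := by
      have : (0 : ℝ) < 1 / (n + 1) := by positivity
      linarith
    obtain ⟨y, ⟨x, rfl⟩, hy⟩ := exists_lt_of_lt_csSup hrange_ne hlt
    exact ⟨x, hy⟩
  choose x hx using hxex
  have hgs : Filter.Tendsto (fun n => g (x n)) Filter.atTop (nhds s) := by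
    have hlow : Filter.Tendsto (fun n : ℕ => s - 1 / (n + 1)) Filter.atTop (nhds s) := by
      have h0 : Filter.Tendsto (fun n : ℕ => 1 / ((n : ℝ) + 1)) Filter.atTop (nhds 0) :=
        tendsto_one_div_add_atTop_nhds_zero_nat
      have := (tendsto_const_nhds (x := s) (f := Filter.atTop (α := ℕ))).sub h0
      simpa using this
    exact tendsto_of_tendsto_of_tendsto_of_le_of_le hlow tendsto_const_nhds
      (fun n => (hx n).le) (fun n => hgle (x n))
  -- extract a pointwise convergent subsequence of the translates of f
  set X := ZLat d → Set.Icc (0 : ℝ) C with hXdef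
  set y : ℕ → X := fun n z => ⟨f (z + x n), ⟨hf0 _, hfC _⟩⟩ with hydef
  obtain ⟨L, φ, hφ, hconv⟩ := CompactSpace.tendsto_subseq y
  set Φ : ZLat d → ℝ := fun z => (L z : ℝ) with hΦdef
  have hΦ : ∀ z : ZLat d, Filter.Tendsto (fun k => f (z + x (φ k))) Filter.atTop (nhds (Φ z)) := by
    intro z
    have h1 : Filter.Tendsto (fun k => y (φ k) z) Filter.atTop (nhds (L z)) :=
      tendsto_pi_nhds.mp hconv z
    exact (continuous_subtype_val.tendsto (L z)).comp h1
  have hΦ0 : ∀ z, 0 ≤ Φ z := fun z => (L z).2.1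
  have hΦC : ∀ z, Φ z ≤ C := fun z => (L z).2.2
  set h : ZLat d → ℝ := fun z => σ * (Φ (z + a) - Φ z) with hhdef
  have hgh : ∀ z : ZLat d, Filter.Tendsto (fun k => g (z + x (φ k))) Filter.atTop (nhds (h z)) := by
    intro z
    have hfun : (fun k => g (z + x (φ k)))
        = fun k => σ * (f ((z + a) + x (φ k)) - f (z + x (φ k))) := by
      funext k
      rw [hgdef]
      dsimp only
      congr 2
      abel
    rw [hfun]
    exact ((hΦ (z + a)).sub (hΦ z)).const_mul σ
  have hh0 : h 0 = s := by
    refine tendsto_nhds_unique ?_ (hgs.comp hφ.tendsto_atTop)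
    have := hgh 0
    simpa [Function.comp_def] using this
  have hhle : ∀ z, h z ≤ s :=
    fun z => le_of_tendsto (hgh z) (Filter.Eventually.of_forall fun k => hgle _)
  have hhb : ∀ z, |h z| ≤ 2 * C :=
    fun z => le_of_tendsto (hgh z).abs (Filter.Eventually.of_forall fun k => hgb _)
  have hsummh : ∀ z : ZLat d, Summable (fun j => p j * h (z + j)) := by
    intro z
    refine Summable.of_abs ?_
    refine (hp1.summable.mul_right (2 * C)).of_nonneg_of_le (fun j => abs_nonneg _) fun j => ?_
    rw [abs_mul, abs_of_nonneg (hp0 j)]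
    exact mul_le_mul_of_nonneg_left (hhb _) (hp0 j)
  have hhharm : ∀ z : ZLat d, (∑' j : ZLat d, p j * h (z + j)) = h z := by
    intro z
    refine tendsto_nhds_unique ?_ (hgh z)
    have hfun : (fun k => g (z + x (φ k)))
        = fun k => ∑' j : ZLat d, p j * g ((z + x (φ k)) + j) := by
      funext k; rw [hgharm]
    rw [hfun]
    refine tendsto_tsum_of_dominated_convergence
      (bound := fun j => p j * (2 * C)) (hp1.summable.mul_right _) (fun j => ?_) ?_
    · have hfun2 : (fun k => p j * g ((z + j) + x (φ k)))
          = fun k => p j * g (z + x (φ k) + j) := by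
        funext k; congr 2; abel
      have := ((hgh (z + j)).const_mul (p j))
      rwa [hfun2] at this
    · refine Filter.Eventually.of_forall fun k => fun j => ?_
      rw [Real.norm_eq_abs, abs_mul, abs_of_nonneg (hp0 j)]
      exact mul_le_mul_of_nonneg_left (hgb _) (hp0 j)
  have hmax : ∀ z : ZLat d, h z = s → ∀ j : ZLat d, 0 < p j → h (z + j) = s := by
    intro z hz j hj
    set u : ZLat d → ℝ := fun j => p j * (s - h (z + j)) with hudef
    have hu0 : ∀ j, 0 ≤ u j := fun j => mul_nonneg (hp0 j) (sub_nonneg.mpr (hhle _))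
    have husum : Summable u := by
      have : u = fun j => p j * s - p j * h (z + j) := by
        funext j; rw [hudef]; ring
      rw [this]
      exact (hp1.summable.mul_right s).sub (hsummh z)
    have hutsum : ∑' j, u j = 0 := by
      have : u = fun j => p j * s - p j * h (z + j) := by
        funext j; rw [hudef]; ring
      rw [this, Summable.tsum_sub (hp1.summable.mul_right s) (hsummh z), tsum_mul_right,
        hp1.tsum_eq, hhharm z, hz, one_mul, sub_self]
    have huj : u j = 0 := by
      have hle : u j ≤ 0 := hutsum ▸ Summable.le_tsum husum j fun b _ => hu0 b
      exact le_antisymm hle (hu0 j)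
    have := mul_eq_zero.mp huj
    rcases this with h1 | h2
    · exact absurd h1 hj.ne'
    · linarith [sub_eq_zero.mp h2]
  have hka : ∀ k : ℕ, h (k • a) = s := by
    intro k
    induction k with
    | zero => simpa using hh0
    | succ k ih =>
        have := hmax (k • a) ih a ha
        rwa [← succ_nsmul a k] at this
  have hΦdiff : ∀ z : ZLat d, Φ (z + a) - Φ z = σ * h z := by
    intro z
    have : σ * h z = (σ * σ) * (Φ (z + a) - Φ z) := by rw [hhdef]; ring
    rw [this, hσσ, one_mul]
  have hΦk : ∀ k : ℕ, Φ (k • a) = Φ 0 + k * (σ * s) := by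
    intro k
    induction k with
    | zero => simp
    | succ k ih =>
        have h1 : Φ ((k + 1) • a) - Φ (k • a) = σ * h (k • a) := by
          rw [← hΦdiff (k • a), succ_nsmul]
        rw [hka k] at h1
        have : Φ ((k + 1) • a) = Φ (k • a) + σ * s := by linarith
        rw [this, ih]
        push_cast
        ring
  -- conclude s ≤ 0
  have hs_le : s ≤ 0 := by
    by_contra hs
    push_neg at hs
    obtain ⟨k, hk⟩ := exists_nat_gt (C / s)
    have hks : C < k * s := (div_lt_iff₀ hs).mp hk
    have h1 : |Φ (k • a) - Φ 0| ≤ C := by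
      rw [abs_le]
      constructor <;> [linarith [hΦ0 (k • a), hΦC (0 : ZLat d)];
        linarith [hΦC (k • a), hΦ0 (0 : ZLat d)]]
    rw [hΦk k, add_sub_cancel_left, abs_mul, abs_mul, hσabs,
      Nat.abs_cast, abs_of_pos hs] at h1
    rw [one_mul] at h1
    linarith
  exact fun z => (hgle z).trans hs_le


end AuxCD

/-- Bounded nonnegative subharmonic functions of an irreducible
recurrent random walk on `ℤ^d` are constant. -/
theorem bounded_subharmonic_of_recurrent_walk_constant
    (d : ℕ) (hd : 1 ≤ d) (p : ZLat d → ℝ)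
    (hp_nonneg : ∀ i, 0 ≤ p i) (hp_sum : HasSum p 1)
    (hirr : ∀ i : ZLat d, ∃ n : ℕ, 0 < convPow p n i)
    (hrec : ∑' n : ℕ, ENNReal.ofReal (convPow p n 0) = ⊤)
    (f : ZLat d → ℝ) (hf_bdd : ∃ C, ∀ i, |f i| ≤ C) (hf_nonneg : ∀ i, 0 ≤ f i)
    (hsub : ∀ i : ZLat d, f i ≤ ∑' j : ZLat d, p j * f (i + j)) :
    ∀ i j : ZLat d, f i = f j := by
  classical
  obtain ⟨C, hfC⟩ := hf_bdd
  have hharm := harmonic_of_subharmonic hp_nonneg hp_sum hirr hrec hfC hf_nonneg hsub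
  have hfle : ∀ i, f i ≤ C := fun i => (abs_le.mp (hfC i)).2
  have htrans : ∀ a : ZLat d, 0 < p a → ∀ x : ZLat d, f (x + a) = f x := by
    intro a ha x
    have h1 := translation_le hp_nonneg hp_sum hf_nonneg hfle hharm ha (Or.inl rfl) x
    have h2 := translation_le hp_nonneg hp_sum hf_nonneg hfle hharm ha (Or.inr rfl) x
    nlinarith [h1, h2]
  have hcp0 : ∀ n (i : ZLat d), 0 ≤ convPow p n i :=
    fun n => (convPow_facts hp_nonneg hp_sum n).1
  have hstep : ∀ n (i : ZLat d), 0 < convPow p n i → ∀ x : ZLat d, f (x + i) = f x := by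
    intro n
    induction n with
    | zero =>
        intro i hi x
        by_cases h : i = 0
        · subst h; rw [add_zero]
        · rw [show convPow p 0 i = if i = 0 then (1:ℝ) else 0 from rfl, if_neg h] at hi
          norm_num at hi
    | succ n ih =>
        intro i hi x
        rw [show convPow p (n+1) i = ∑' j : ZLat d, convPow p n j * p (i - j) from rfl] at hi
        obtain ⟨j, hj⟩ : ∃ j : ZLat d, convPow p n j * p (i - j) ≠ 0 := by
          by_contra hall
          push_neg at hall
          have hz : (∑' j : ZLat d, convPow p n j * p (i - j)) = 0 := by
            calc (∑' j : ZLat d, convPow p n j * p (i - j)) = ∑' _ : ZLat d, (0:ℝ) :=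
                  tsum_congr hall
              _ = 0 := tsum_zero
          rw [hz] at hi
          exact lt_irrefl 0 hi
        obtain ⟨hj1, hj2⟩ := mul_ne_zero_iff.mp hj
        have hj1' : 0 < convPow p n j := lt_of_le_of_ne (hcp0 n j) (Ne.symm hj1)
        have hj2' : 0 < p (i - j) := lt_of_le_of_ne (hp_nonneg _) (Ne.symm hj2)
        calc f (x + i) = f ((x + j) + (i - j)) := by congr 1; abel
          _ = f (x + j) := htrans _ hj2' _
          _ = f x := ih j hj1' x
  intro i j
  obtain ⟨n, hn⟩ := hirr i
  obtain ⟨m, hm⟩ := hirr j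
  have h1 := hstep n i hn 0
  have h2 := hstep m j hm 0
  rw [zero_add] at h1 h2
  rw [h1, h2]
end
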